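/- arXiv:math/9805081 — 4 statements merged into one kernel-verified Lean document; each statement's English description precedes it below -/
import Mathlib

section
/- Let g, h : (0,∞) → [0,ω₁) be left-continuous non-increasing functions whose ranges are finite sets of ordinals, such that there exists A < ∞ with g(t) = h(t) = 0 for all t > A, and g(t) ≤ h(t) for all t. Let I = (a,b] be an interval on which both g and h are constant, and let γ be an ordinal with γ ≤ g(t) for t ∈ I. If G and H are the non-increasing left-continuous rearrangements of g − γ·1_I and h − γ·1_I respectively, then G(t) ≤ H(t) for all t > 0, and λ({t : g(t)+1 ≤ h(t)}) ≤ λ({t : G(t)+1 ≤ H(t)}). -/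
open MeasureTheory Set Ordinal Filter
open scoped Classical

/-- `g` is non-increasing on `(0,∞)`. -/
def NonIncr (g : ℝ → Ordinal) : Prop := ∀ s t : ℝ, 0 < s → s ≤ t → g t ≤ g s

/-- `g` is left continuous on `(0,∞)`; for non-increasing ordinal-valued
functions this is equivalent to being locally constant from the left. -/
def LeftCont (g : ℝ → Ordinal) : Prop :=
  ∀ t : ℝ, 0 < t → ∃ δ > 0, ∀ s : ℝ, t - δ < s → s ≤ t → g s = g t

/-- `g` has finite range on `(0,∞)`. -/
def FiniteRange (g : ℝ → Ordinal) : Prop := (g '' Set.Ioi (0:ℝ)).Finite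

/-- `g` takes values in `[0,ω₁)`, the countable ordinals. -/
def CountableValued (g : ℝ → Ordinal) : Prop := ∀ t : ℝ, 0 < t → g t < ω₁

/-- `g` vanishes beyond `A`. -/
def VanishesBeyond (g : ℝ → Ordinal) (A : ℝ) : Prop := ∀ t : ℝ, A < t → g t = 0

/-- The level set `{t ∈ (0,∞) : g t = α}`. -/
def lev (g : ℝ → Ordinal) (α : Ordinal) : Set ℝ := {t | 0 < t ∧ g t = α}

/-- `G` is the non-increasing left-continuous rearrangement of `u`: it is
non-increasing, left continuous, and each nonzero level set has the same
Lebesgue measure as that of `u`. -/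
def IsRearrangement (G u : ℝ → Ordinal) : Prop :=
  NonIncr G ∧ LeftCont G ∧ ∀ α : Ordinal, 0 < α → volume (lev G α) = volume (lev u α)

/-- The function `g − γ·1_I` (pointwise ordinal subtraction on `I`). -/
noncomputable def subInd (g : ℝ → Ordinal) (γ : Ordinal) (I : Set ℝ) : ℝ → Ordinal :=
  fun t => if t ∈ I then g t - γ else g t

/-- The superlevel set. -/
def supl (f : ℝ → Ordinal) (α : Ordinal) : Set ℝ := {t | 0 < t ∧ α ≤ f t}

lemma lemA {G : ℝ → Ordinal} (hNI : NonIncr G) (hLC : LeftCont G) (α : Ordinal) {t : ℝ}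
    (ht : 0 < t) : α ≤ G t ↔ ENNReal.ofReal t ≤ volume (supl G α) := by
  constructor
  · intro hα
    have h1 : Set.Ioc (0:ℝ) t ⊆ supl G α := fun s hs => ⟨hs.1, hα.trans (hNI s t hs.1 hs.2)⟩
    calc ENNReal.ofReal t = volume (Set.Ioc (0:ℝ) t) := by rw [Real.volume_Ioc, _root_.sub_zero]
      _ ≤ _ := measure_mono h1
  · intro hvol
    have key : ∀ s, 0 < s → s < t → α ≤ G s := by
      intro s hs hst
      by_contra hcon
      have hsub : supl G α ⊆ Set.Ioc 0 s := by
        rintro r ⟨hr, hαr⟩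
        refine ⟨hr, ?_⟩
        by_contra hrs; push_neg at hrs
        exact hcon (hαr.trans (hNI s r hs hrs.le))
      have h2 : volume (supl G α) ≤ ENNReal.ofReal s := by
        calc volume (supl G α) ≤ volume (Set.Ioc (0:ℝ) s) := measure_mono hsub
          _ = ENNReal.ofReal s := by rw [Real.volume_Ioc, _root_.sub_zero]
      have h3 : ENNReal.ofReal t ≤ ENNReal.ofReal s := hvol.trans h2
      have h4 : ENNReal.ofReal s < ENNReal.ofReal t := by
        exact (ENNReal.ofReal_lt_ofReal_iff ht).2 hst
      exact absurd h3 (not_le.2 h4)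
    obtain ⟨δ, hδ, hδ'⟩ := hLC t ht
    set s := max (t - δ/2) (t/2) with hs
    have hs0 : 0 < s := lt_of_lt_of_le (half_pos ht) (le_max_right _ _)
    have hst : s < t := by
      apply max_lt <;> linarith
    have h1 : t - δ < s := lt_of_lt_of_le (by linarith) (le_max_left _ _)
    have := hδ' s h1 hst.le
    rw [← this]
    exact key s hs0 hst

lemma level_pos {G : ℝ → Ordinal} (hLC : LeftCont G) {t : ℝ} (ht : 0 < t) :
    0 < volume (lev G (G t)) := by
  obtain ⟨δ, hδ, hδ'⟩ := hLC t ht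
  set s := max (t - δ) (t/2) with hs
  have hst : s < t := max_lt (by linarith) (by linarith)
  have hsub : Set.Ioc s t ⊆ lev G (G t) := by
    rintro r ⟨hr1, hr2⟩
    have hr0 : 0 < r := lt_trans (by positivity : (0:ℝ) < t/2) (lt_of_le_of_lt (le_max_right _ _) hr1)
    exact ⟨hr0, hδ' r (lt_of_le_of_lt (le_max_left _ _) hr1) hr2⟩
  calc (0:ENNReal) < ENNReal.ofReal (t - s) := ENNReal.ofReal_pos.2 (by linarith)
    _ = volume (Set.Ioc s t) := (Real.volume_Ioc).symm
    _ ≤ _ := measure_mono hsub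

lemma lev_meas_of_nonIncr {g : ℝ → Ordinal} (hNI : NonIncr g) (β : Ordinal) :
    MeasurableSet (lev g β) := by
  apply Set.OrdConnected.measurableSet
  constructor
  rintro x ⟨hx, hxβ⟩ y ⟨hy, hyβ⟩ z ⟨hz1, hz2⟩
  have hz0 : 0 < z := lt_of_lt_of_le hx hz1
  refine ⟨hz0, le_antisymm ?_ ?_⟩
  · rw [← hxβ]; exact hNI x z hx hz1
  · rw [← hyβ]; exact hNI z y hz0 hz2

lemma supl_meas_of_nonIncr {g : ℝ → Ordinal} (hNI : NonIncr g) (β : Ordinal) :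
    MeasurableSet (supl g β) := by
  apply Set.OrdConnected.measurableSet
  constructor
  rintro x ⟨hx, hxβ⟩ y ⟨hy, hyβ⟩ z ⟨hz1, hz2⟩
  have hz0 : 0 < z := lt_of_lt_of_le hx hz1
  exact ⟨hz0, hyβ.trans (hNI z y hz0 hz2)⟩

lemma lev_subInd_meas {g : ℝ → Ordinal} (hNI : NonIncr g) {a b : ℝ} (hab : 0 ≤ a) (h : a < b)
    (hconst : ∀ s t : ℝ, s ∈ Set.Ioc a b → t ∈ Set.Ioc a b → g s = g t) (γ β : Ordinal) :
    MeasurableSet (lev (subInd g γ (Set.Ioc a b)) β) := by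
  have hb : b ∈ Set.Ioc a b := ⟨h, le_rfl⟩
  have hset : lev (subInd g γ (Set.Ioc a b)) β =
      (if g b - γ = β then Set.Ioc a b else ∅) ∪ (lev g β \ Set.Ioc a b) := by
    ext t
    simp only [lev, subInd, Set.mem_union, Set.mem_diff, Set.mem_setOf_eq]
    by_cases htI : t ∈ Set.Ioc a b
    · have ht0 : 0 < t := lt_of_le_of_lt hab htI.1
      have hgt : g t = g b := hconst t b htI hb
      by_cases hc : g b - γ = β <;> simp [htI, ht0, hgt, hc]
    · by_cases hc : g b - γ = β <;> simp [htI, hc]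
  rw [hset]
  apply MeasurableSet.union
  · split <;> simp [measurableSet_Ioc]
  · exact (lev_meas_of_nonIncr hNI β).diff measurableSet_Ioc

lemma decomp_set {f : ℝ → Ordinal} {F : Finset Ordinal}
    (hcov : ∀ t : ℝ, 0 < t → 0 < f t → f t ∈ F) {α : Ordinal} (hα : 0 < α) :
    supl f α = ⋃ β ∈ F.filter (α ≤ ·), lev f β := by
  ext t
  simp only [supl, lev, Set.mem_setOf_eq, Set.mem_iUnion, Finset.mem_filter, exists_prop]
  constructor
  · rintro ⟨ht, hαt⟩
    exact ⟨f t, ⟨hcov t ht (hα.trans_le hαt), hαt⟩, ht, rfl⟩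
  · rintro ⟨β, ⟨_, hαβ⟩, ht, rfl⟩
    exact ⟨ht, hαβ⟩

lemma decomp {f : ℝ → Ordinal} {F : Finset Ordinal}
    (hcov : ∀ t : ℝ, 0 < t → 0 < f t → f t ∈ F)
    (hmeas : ∀ β : Ordinal, 0 < β → MeasurableSet (lev f β)) {α : Ordinal} (hα : 0 < α) :
    volume (supl f α) = ∑ β ∈ F.filter (α ≤ ·), volume (lev f β) := by
  rw [decomp_set hcov hα]
  apply measure_biUnion_finset
  · intro β hβ β' hβ' hne
    simp only [Function.onFun]
    apply Set.disjoint_left.2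
    rintro t ⟨_, h1⟩ ⟨_, h2⟩
    exact hne (h1 ▸ h2 ▸ rfl)
  · intro β hβ
    exact hmeas β (hα.trans_le (Finset.mem_filter.1 hβ).2)

lemma supl_meas {f : ℝ → Ordinal} {F : Finset Ordinal}
    (hcov : ∀ t : ℝ, 0 < t → 0 < f t → f t ∈ F)
    (hmeas : ∀ β : Ordinal, 0 < β → MeasurableSet (lev f β)) {α : Ordinal} (hα : 0 < α) :
    MeasurableSet (supl f α) := by
  rw [decomp_set hcov hα]
  exact Finset.measurableSet_biUnion _
    (fun β hβ => hmeas β (hα.trans_le (Finset.mem_filter.1 hβ).2))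

/-- The measure of superlevel sets is preserved under rearrangement. -/
lemma m_eq {G u : ℝ → Ordinal} (hG : IsRearrangement G u) {F : Finset Ordinal}
    (hcov : ∀ t : ℝ, 0 < t → 0 < u t → u t ∈ F)
    (hmeas : ∀ β : Ordinal, 0 < β → MeasurableSet (lev u β)) {α : Ordinal} (hα : 0 < α) :
    volume (supl G α) = volume (supl u α) := by
  obtain ⟨hNI, hLC, hlev⟩ := hG
  have hcovG : ∀ t : ℝ, 0 < t → 0 < G t → G t ∈ F := by
    intro t ht hGt
    have h1 : 0 < volume (lev u (G t)) := (hlev _ hGt) ▸ level_pos hLC ht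
    obtain ⟨s, hs, hsu⟩ := nonempty_of_measure_ne_zero h1.ne'
    exact hsu ▸ hcov s hs (hsu ▸ hGt)
  rw [decomp hcovG (fun β _ => lev_meas_of_nonIncr hNI β) hα, decomp hcov hmeas hα]
  apply Finset.sum_congr rfl
  intro β hβ
  exact hlev β (hα.trans_le (Finset.mem_filter.1 hβ).2)

/-- Key combinatorial lemma: replacing a decreasing family of set differences by
aligned intervals does not decrease the measure of the union. -/
lemma Llemma : ∀ (n : ℕ) (l : List (Set ℝ × Set ℝ × ℝ)), l.length ≤ n →
    (∀ x ∈ l, MeasurableSet x.1 ∧ x.1 ⊆ x.2.1 ∧ volume x.2.1 ≤ ENNReal.ofReal x.2.2) →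
    l.Pairwise (fun x y => y.1 ⊆ x.1 ∧ y.2.1 ⊆ x.2.1 ∧ y.2.2 ≤ x.2.2) →
    volume (⋃ x ∈ l, (x.2.1 \ x.1)) ≤ volume (⋃ x ∈ l, Set.Ioc (volume x.1).toReal x.2.2) := by
  intro n
  induction n with
  | zero =>
    intro l hlen _ _
    have : l = [] := List.length_eq_zero_iff.1 (Nat.le_zero.1 hlen)
    simp [this]
  | succ n ih =>
    rintro (_ | ⟨x, tl⟩) hlen hall hpw
    · simp
    rw [List.pairwise_cons] at hpw
    obtain ⟨hhead, htlpw⟩ := hpw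
    obtain ⟨hU, hUV, hVc⟩ := hall x (List.mem_cons_self (a := x) (l := tl))
    set U := x.1 with hUdef
    set V := x.2.1 with hVdef
    set c := x.2.2 with hcdef
    have hVfin : volume V ≠ ⊤ := (hVc.trans_lt ENNReal.ofReal_lt_top).ne
    have hUfin : volume U ≠ ⊤ := ((measure_mono hUV).trans_lt
      (hVc.trans_lt ENNReal.ofReal_lt_top)).ne
    set u₀ := (volume U).toReal with hu0def
    have hofu : ENNReal.ofReal u₀ = volume U := ENNReal.ofReal_toReal hUfin
    -- the mapped tail
    set f : (Set ℝ × Set ℝ × ℝ) → (Set ℝ × Set ℝ × ℝ) :=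
      fun y => (y.1, y.2.1 ∩ U, min y.2.2 u₀) with hfdef
    -- the two union splittings
    have hcup : ∀ (s : (Set ℝ × Set ℝ × ℝ) → Set ℝ),
        (⋃ y ∈ x :: tl, s y) = s x ∪ ⋃ y ∈ tl, s y := by
      intro s; ext t
      simp only [Set.mem_union, Set.mem_iUnion, List.mem_cons, exists_prop]
      constructor
      · rintro ⟨y, (rfl | hy), hts⟩
        · exact Or.inl hts
        · exact Or.inr ⟨y, hy, hts⟩
      · rintro (hts | ⟨y, hy, hts⟩)
        · exact ⟨x, Or.inl rfl, hts⟩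
        · exact ⟨y, Or.inr hy, hts⟩
    have hmapcup : ∀ (s : (Set ℝ × Set ℝ × ℝ) → Set ℝ),
        (⋃ y ∈ tl.map f, s y) = ⋃ y ∈ tl, s (f y) := by
      intro s; ext t; simp only [Set.mem_iUnion, List.mem_map, exists_prop]
      constructor
      · rintro ⟨z, ⟨y, hy, rfl⟩, hts⟩; exact ⟨y, hy, hts⟩
      · rintro ⟨y, hy, hts⟩; exact ⟨f y, ⟨y, hy, rfl⟩, hts⟩
    -- Step A : bound the left side
    have hdiffeq : ∀ y ∈ tl, (y.2.1 \ y.1) \ (V \ U) = (y.2.1 ∩ U) \ y.1 := by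
      intro y hy
      have hyV : y.2.1 ⊆ V := (hhead y hy).2.1
      ext t
      simp only [Set.mem_diff, Set.mem_inter_iff]
      have : t ∈ y.2.1 → t ∈ V := fun ht => hyV ht
      tauto
    have hA : volume (⋃ y ∈ x :: tl, (y.2.1 \ y.1)) ≤
        volume (V \ U) + volume (⋃ y ∈ tl.map f, (y.2.1 \ y.1)) := by
      rw [hcup]
      calc volume ((V \ U) ∪ ⋃ y ∈ tl, (y.2.1 \ y.1))
          = volume ((V \ U) ∪ ((⋃ y ∈ tl, (y.2.1 \ y.1)) \ (V \ U))) := by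
            rw [Set.union_diff_self]
        _ ≤ volume (V \ U) + volume ((⋃ y ∈ tl, (y.2.1 \ y.1)) \ (V \ U)) :=
            measure_union_le _ _
        _ = volume (V \ U) + volume (⋃ y ∈ tl.map f, (y.2.1 \ y.1)) := by
            have hseteq : (⋃ y ∈ tl, (y.2.1 \ y.1)) \ (V \ U) =
                ⋃ y ∈ tl.map f, (y.2.1 \ y.1) := by
              rw [hmapcup]
              ext t
              simp only [Set.mem_diff, Set.mem_iUnion, exists_prop]
              constructor
              · rintro ⟨⟨y, hy, ht⟩, hnt⟩
                have h2 : t ∈ (y.2.1 ∩ U) \ y.1 :=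
                  (hdiffeq y hy) ▸ (⟨ht, hnt⟩ : t ∈ (y.2.1 \ y.1) \ (V \ U))
                exact ⟨y, hy, h2.1, h2.2⟩
              · rintro ⟨y, hy, ht⟩
                have h2 : t ∈ (y.2.1 \ y.1) \ (V \ U) :=
                  (hdiffeq y hy).symm ▸ (⟨ht.1, ht.2⟩ : t ∈ (y.2.1 ∩ U) \ y.1)
                exact ⟨⟨y, hy, h2.1⟩, h2.2⟩
            rw [hseteq]
    -- apply the inductive hypothesis to the mapped tail
    have hih : volume (⋃ y ∈ tl.map f, (y.2.1 \ y.1)) ≤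
        volume (⋃ y ∈ tl.map f, Set.Ioc (volume y.1).toReal y.2.2) := by
      apply ih
      · rw [List.length_map]; exact Nat.le_of_succ_le_succ hlen
      · rintro z hz
        obtain ⟨y, hy, rfl⟩ := List.mem_map.1 hz
        obtain ⟨hy1, hy2, hy3⟩ := hall y (List.mem_cons_of_mem x hy)
        refine ⟨hy1, Set.subset_inter hy2 (hhead y hy).1, ?_⟩
        show volume (y.2.1 ∩ U) ≤ ENNReal.ofReal (min y.2.2 u₀)
        rcases le_total y.2.2 u₀ with hc | hc
        · rw [min_eq_left hc]
          exact (measure_mono Set.inter_subset_left).trans hy3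
        · rw [min_eq_right hc, hofu]
          exact measure_mono Set.inter_subset_right
      · apply List.pairwise_map.2
        apply htlpw.imp
        rintro y z ⟨h1, h2, h3⟩
        exact ⟨h1, Set.inter_subset_inter_left U h2, min_le_min h3 le_rfl⟩
    -- bound volume (V \ U) by the head interval
    have hVU : volume (V \ U) ≤ volume (Set.Ioc u₀ c) := by
      rw [measure_diff hUV hU.nullMeasurableSet hUfin, Real.volume_Ioc,
        ENNReal.ofReal_sub c ENNReal.toReal_nonneg, hofu]
      exact tsub_le_tsub_right hVc _
    -- assemble the right side
    have hTsub : (⋃ y ∈ tl.map f, Set.Ioc (volume y.1).toReal y.2.2) ⊆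
        ⋃ y ∈ tl, Set.Ioc (volume y.1).toReal y.2.2 := by
      rw [hmapcup]
      apply Set.iUnion₂_mono
      intro y hy
      exact Set.Ioc_subset_Ioc le_rfl (min_le_left _ _)
    have hdisj : Disjoint (Set.Ioc u₀ c)
        (⋃ y ∈ tl.map f, Set.Ioc (volume y.1).toReal y.2.2) := by
      rw [Set.disjoint_left]
      rintro t ⟨ht1, _⟩ ht2
      rw [hmapcup] at ht2
      simp only [Set.mem_iUnion] at ht2
      obtain ⟨y, hy, ht3, ht4⟩ := ht2
      exact absurd (ht4.trans (min_le_right _ _)) (not_le.2 ht1)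
    have hB : volume (Set.Ioc u₀ c) + volume (⋃ y ∈ tl.map f, Set.Ioc (volume y.1).toReal y.2.2)
        ≤ volume (⋃ y ∈ x :: tl, Set.Ioc (volume y.1).toReal y.2.2) := by
      rw [hcup]
      rw [← measure_union hdisj ?_]
      · apply measure_mono
        apply Set.union_subset_union_right
        exact hTsub
      · exact (tl.map f).finite_toSet.measurableSet_biUnion (fun y _ => measurableSet_Ioc)
    calc volume (⋃ y ∈ x :: tl, (y.2.1 \ y.1))
        ≤ volume (V \ U) + volume (⋃ y ∈ tl.map f, (y.2.1 \ y.1)) := hA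
      _ ≤ volume (Set.Ioc u₀ c) + volume (⋃ y ∈ tl.map f, Set.Ioc (volume y.1).toReal y.2.2) :=
          add_le_add hVU hih
      _ ≤ _ := hB

/-- Lemma 3.2, `rearrange-step`. -/
theorem stmt_0 (g h G H : ℝ → Ordinal) (A : ℝ) (a b : ℝ) (γ : Ordinal)
    (hA : ∀ t : ℝ, A < t → g t = 0 ∧ h t = 0)
    (hgNI : NonIncr g) (hgLC : LeftCont g) (hgFR : FiniteRange g) (hgCV : CountableValued g)
    (hhNI : NonIncr h) (hhLC : LeftCont h) (hhFR : FiniteRange h) (hhCV : CountableValued h)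
    (hle : ∀ t : ℝ, 0 < t → g t ≤ h t)
    (hab : 0 ≤ a) (haltb : a < b)
    (hgconst : ∀ s t : ℝ, s ∈ Set.Ioc a b → t ∈ Set.Ioc a b → g s = g t)
    (hhconst : ∀ s t : ℝ, s ∈ Set.Ioc a b → t ∈ Set.Ioc a b → h s = h t)
    (hγ : ∀ t ∈ Set.Ioc a b, γ ≤ g t)
    (hG : IsRearrangement G (subInd g γ (Set.Ioc a b)))
    (hH : IsRearrangement H (subInd h γ (Set.Ioc a b))) :
    (∀ t : ℝ, 0 < t → G t ≤ H t) ∧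
      volume {t : ℝ | 0 < t ∧ g t + 1 ≤ h t} ≤ volume {t : ℝ | 0 < t ∧ G t + 1 ≤ H t} := by
  have hlt_iff : ∀ x y : Ordinal, x + 1 ≤ y ↔ x < y := fun x y => by
    rw [Ordinal.add_one_eq_succ, Order.succ_le_iff]
  set u := subInd g γ (Set.Ioc a b) with hudef
  set v := subInd h γ (Set.Ioc a b) with hvdef
  have hbI : b ∈ Set.Ioc a b := ⟨haltb, le_rfl⟩
  have hγh : ∀ t ∈ Set.Ioc a b, γ ≤ h t := fun t htI =>
    (hγ t htI).trans (hle t (lt_of_le_of_lt hab htI.1))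
  -- pointwise comparison of u and v
  have huv : ∀ t : ℝ, 0 < t → u t ≤ v t := by
    intro t ht
    by_cases htI : t ∈ Set.Ioc a b
    · simp only [hudef, hvdef, subInd, if_pos htI]
      rw [← add_le_add_iff_left γ,
        Ordinal.add_sub_cancel_of_le (hγ t htI), Ordinal.add_sub_cancel_of_le (hγh t htI)]
      exact hle t ht
    · simp only [hudef, hvdef, subInd, if_neg htI]
      exact hle t ht
  have huvlt : ∀ t : ℝ, 0 < t → (g t < h t ↔ u t < v t) := by
    intro t ht
    by_cases htI : t ∈ Set.Ioc a b
    · simp only [hudef, hvdef, subInd, if_pos htI]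
      conv_lhs => rw [← Ordinal.add_sub_cancel_of_le (hγ t htI),
        ← Ordinal.add_sub_cancel_of_le (hγh t htI)]
      exact add_lt_add_iff_left γ
    · simp only [hudef, hvdef, subInd, if_neg htI]
  -- measurability of level sets of u and v
  have hulev : ∀ β : Ordinal, 0 < β → MeasurableSet (lev u β) := fun β _ =>
    lev_subInd_meas hgNI hab haltb hgconst γ β
  have hvlev : ∀ β : Ordinal, 0 < β → MeasurableSet (lev v β) := fun β _ =>
    lev_subInd_meas hhNI hab haltb hhconst γ β
  -- finite value set
  have hFSfin : ((u '' Set.Ioi 0) ∪ (v '' Set.Ioi 0)).Finite := by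
    apply Set.Finite.union
    · apply Set.Finite.subset (hgFR.union (Set.finite_singleton (g b - γ)))
      rintro β ⟨t, ht, rfl⟩
      by_cases htI : t ∈ Set.Ioc a b
      · right
        simp only [hudef, subInd, if_pos htI, hgconst t b htI hbI]
        rfl
      · left
        refine ⟨t, ht, ?_⟩
        simp only [hudef, subInd, if_neg htI]
    · apply Set.Finite.subset (hhFR.union (Set.finite_singleton (h b - γ)))
      rintro β ⟨t, ht, rfl⟩
      by_cases htI : t ∈ Set.Ioc a b
      · right
        simp only [hvdef, subInd, if_pos htI, hhconst t b htI hbI]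
        rfl
      · left
        refine ⟨t, ht, ?_⟩
        simp only [hvdef, subInd, if_neg htI]
  set F : Finset Ordinal := hFSfin.toFinset.filter (fun α => 0 < α) with hFdef
  have hFpos : ∀ α ∈ F, (0:Ordinal) < α := fun α hα => (Finset.mem_filter.1 hα).2
  have hcovu : ∀ t : ℝ, 0 < t → 0 < u t → u t ∈ F := by
    intro t ht hpos
    exact Finset.mem_filter.2 ⟨hFSfin.mem_toFinset.2 (Or.inl ⟨t, ht, rfl⟩), hpos⟩
  have hcovv : ∀ t : ℝ, 0 < t → 0 < v t → v t ∈ F := by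
    intro t ht hpos
    exact Finset.mem_filter.2 ⟨hFSfin.mem_toFinset.2 (Or.inr ⟨t, ht, rfl⟩), hpos⟩
  -- finiteness of superlevel measures
  have hsuplv : ∀ α : Ordinal, 0 < α → volume (supl v α) ≠ ⊤ := by
    intro α hα
    have hsub : supl v α ⊆ Set.Ioc 0 (max A b) := by
      rintro t ⟨ht, hαt⟩
      refine ⟨ht, ?_⟩
      by_contra hcon
      push_neg at hcon
      have htI : t ∉ Set.Ioc a b := fun hI => absurd hI.2 (not_le.2 (lt_of_le_of_lt
        (le_max_right A b) hcon))
      have hvt : v t = 0 := by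
        simp only [hvdef, subInd, if_neg htI]
        exact (hA t (lt_of_le_of_lt (le_max_left A b) hcon)).2
      rw [hvt] at hαt
      exact absurd hαt (not_le.2 hα)
    exact ((measure_mono hsub).trans_lt (by rw [Real.volume_Ioc]; exact ENNReal.ofReal_lt_top)).ne
  have hsuplu : ∀ α : Ordinal, 0 < α → volume (supl u α) ≠ ⊤ := by
    intro α hα
    have hsub : supl u α ⊆ supl v α := fun t ⟨ht, hαt⟩ => ⟨ht, hαt.trans (huv t ht)⟩
    exact ((measure_mono hsub).trans_lt (lt_top_iff_ne_top.2 (hsuplv α hα))).ne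
  have hsupluv : ∀ α : Ordinal, supl u α ⊆ supl v α := fun α t ⟨ht, hαt⟩ =>
    ⟨ht, hαt.trans (huv t ht)⟩
  -- measure identities
  have hmG : ∀ α : Ordinal, 0 < α → volume (supl G α) = volume (supl u α) := fun α hα =>
    m_eq hG hcovu hulev hα
  have hmH : ∀ α : Ordinal, 0 < α → volume (supl H α) = volume (supl v α) := fun α hα =>
    m_eq hH hcovv hvlev hα
  constructor
  · -- Part 1
    intro t ht
    by_cases hGt : G t = 0
    · rw [hGt]; exact zero_le
    have hpos : (0:Ordinal) < G t := pos_iff_ne_zero.2 hGt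
    apply (lemA hH.1 hH.2.1 (G t) ht).2
    calc ENNReal.ofReal t ≤ volume (supl G (G t)) := (lemA hG.1 hG.2.1 (G t) ht).1 le_rfl
      _ = volume (supl u (G t)) := hmG _ hpos
      _ ≤ volume (supl v (G t)) := measure_mono (hsupluv _)
      _ = volume (supl H (G t)) := (hmH _ hpos).symm
  · -- Part 2
    set l : List (Set ℝ × Set ℝ × ℝ) := (F.sort (· ≤ ·)).map
      (fun α => (supl u α, supl v α, (volume (supl v α)).toReal)) with hldef
    have hall : ∀ x ∈ l, MeasurableSet x.1 ∧ x.1 ⊆ x.2.1 ∧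
        volume x.2.1 ≤ ENNReal.ofReal x.2.2 := by
      rintro x hx
      obtain ⟨α, hα, rfl⟩ := List.mem_map.1 hx
      have hαF : α ∈ F := (Finset.mem_sort _).1 hα
      have hαpos : (0:Ordinal) < α := hFpos α hαF
      exact ⟨supl_meas hcovu hulev hαpos, hsupluv α,
        le_of_eq (ENNReal.ofReal_toReal (hsuplv α hαpos)).symm⟩
    have hpw : l.Pairwise (fun x y => y.1 ⊆ x.1 ∧ y.2.1 ⊆ x.2.1 ∧ y.2.2 ≤ x.2.2) := by
      apply List.pairwise_map.2
      apply List.Pairwise.imp_of_mem ?_ (Finset.pairwise_sort (r := (· ≤ ·)) (s := F))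
      intro α β hα hβ hαβ
      have hαpos : (0:Ordinal) < α := hFpos α ((Finset.mem_sort _).1 hα)
      have hsu : supl u β ⊆ supl u α := fun t ⟨ht, hβt⟩ => ⟨ht, hαβ.trans hβt⟩
      have hsv : supl v β ⊆ supl v α := fun t ⟨ht, hβt⟩ => ⟨ht, hαβ.trans hβt⟩
      exact ⟨hsu, hsv, ENNReal.toReal_mono (hsuplv α hαpos) (measure_mono hsv)⟩
    have hkey := Llemma l.length l le_rfl hall hpw
    -- left side
    have hL : {t : ℝ | 0 < t ∧ g t + 1 ≤ h t} ⊆ ⋃ x ∈ l, (x.2.1 \ x.1) := by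
      rintro t ⟨ht, hgh⟩
      have hlt : u t < v t := (huvlt t ht).1 ((hlt_iff _ _).1 hgh)
      have hαpos : (0:Ordinal) < v t := (zero_le (a := u t)).trans_lt hlt
      have hαF : v t ∈ F := hcovv t ht hαpos
      simp only [Set.mem_iUnion, exists_prop]
      refine ⟨(supl u (v t), supl v (v t), (volume (supl v (v t))).toReal), ?_, ?_, ?_⟩
      · exact List.mem_map.2 ⟨v t, (Finset.mem_sort _).2 hαF, rfl⟩
      · exact ⟨ht, le_rfl⟩
      · rintro ⟨_, hc⟩
        exact absurd hc (not_le.2 hlt)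
    have hR : (⋃ x ∈ l, Set.Ioc (volume x.1).toReal x.2.2) ⊆
        {t : ℝ | 0 < t ∧ G t + 1 ≤ H t} := by
      rintro t ht
      simp only [Set.mem_iUnion, exists_prop] at ht
      obtain ⟨x, hx, ht1, ht2⟩ := ht
      obtain ⟨α, hα, rfl⟩ := List.mem_map.1 hx
      have hαpos : (0:Ordinal) < α := hFpos α ((Finset.mem_sort _).1 hα)
      have ht0 : 0 < t := lt_of_le_of_lt ENNReal.toReal_nonneg ht1
      have hHt : α ≤ H t := by
        apply (lemA hH.1 hH.2.1 α ht0).2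
        rw [hmH α hαpos]
        exact ENNReal.ofReal_le_of_le_toReal ht2
      have hGt : G t < α := by
        by_contra hcon
        push_neg at hcon
        have h1 : ENNReal.ofReal t ≤ volume (supl G α) :=
          (lemA hG.1 hG.2.1 α ht0).1 hcon
        rw [hmG α hαpos] at h1
        have h2 : volume (supl u α) < ENNReal.ofReal t :=
          (ENNReal.lt_ofReal_iff_toReal_lt (hsuplu α hαpos)).2 ht1
        exact absurd h1 (not_le.2 h2)
      exact ⟨ht0, (hlt_iff _ _).2 (hGt.trans_le hHt)⟩
    calc volume {t : ℝ | 0 < t ∧ g t + 1 ≤ h t}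
        ≤ volume (⋃ x ∈ l, (x.2.1 \ x.1)) := measure_mono hL
      _ ≤ volume (⋃ x ∈ l, Set.Ioc (volume x.1).toReal x.2.2) := hkey
      _ ≤ volume {t : ℝ | 0 < t ∧ G t + 1 ≤ H t} := measure_mono hR
end

section
/- Let ε > 0 and let g₀ : (0,∞) → [0,ω₁) be a left-continuous non-increasing function whose range is a finite set of ordinals and such that g₀(t) = 0 for all t > t₀, for some t₀ < ∞. Then there exist n ∈ ℕ, left-continuous non-increasing functions g₁, …, g_n from (0,∞) into [0,ω₁), and a non-increasing finite sequence of ordinals γ₀ ≥ γ₁ ≥ … ≥ γ_{n−1} such that: each γ_i is of the form ω^{β_i} for some ordinal β_i; γ_i ≤ g_i(ε) for each i < n; for each i < n, g_{i+1} is the non-increasing left-continuous rearrangement of g_i − γ_i·1_{(0,ε]}; and g_n(t) = 0 for all t ≥ ε. -/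
open MeasureTheory Set Ordinal Filter
open scoped Classical

noncomputable def cOf (β α : Ordinal) : ℕ := Cardinal.toNat (α / ω ^ β).card

lemma cOf_zero (β : Ordinal) : cOf β 0 = 0 := by
  simp [cOf, Ordinal.zero_div]

lemma omega_absorb {β ξ : Ordinal} (h : ω ^ (β+1) ≤ ξ) : ξ - ω ^ β = ξ := by
  have h1 : ω ^ β + ω ^ (β+1) = ω ^ (β+1) := by
    rw [add_one_eq_succ, opow_succ]
    calc ω^β + ω^β * ω = ω^β * 1 + ω^β * ω := by rw [mul_one]
    _ = ω^β * (1 + ω) := (mul_add _ _ _).symm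
    _ = ω^β * ω := by rw [one_add_omega0]
  have h2 : ω ^ β + ξ = ξ := by
    conv_lhs => rw [← Ordinal.add_sub_cancel_of_le h, ← add_assoc, h1]
    exact Ordinal.add_sub_cancel_of_le h
  calc ξ - ω^β = (ω^β + ξ) - ω^β := by rw [h2]
  _ = ξ := Ordinal.add_sub_cancel _ _

lemma sub_mono_left {a b : Ordinal} (c : Ordinal) (h : a ≤ b) : a - c ≤ b - c :=
  Ordinal.sub_le.2 (h.trans (Ordinal.le_add_sub b c))

lemma cOf_sub {β α : Ordinal} (h1 : ω ^ β ≤ α) (h2 : α < ω ^ (β+1)) :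
    cOf β α = cOf β (α - ω ^ β) + 1 := by
  set P := ω ^ β with hPdef
  have hP : P ≠ 0 := opow_ne_zero _ omega0_ne_zero
  have hqω : α / P < ω := (Ordinal.div_lt hP).2 (by rwa [add_one_eq_succ, opow_succ] at h2)
  obtain ⟨n, hn⟩ := Ordinal.lt_omega0.1 hqω
  have hmod : α % P < P := Ordinal.mod_lt α hP
  have hq0 : n ≠ 0 := by
    rintro rfl
    have := Ordinal.div_add_mod α P
    rw [hn] at this
    simp at this
    rw [← this] at h1
    exact absurd h1 (not_le.2 hmod)
  obtain ⟨m, rfl⟩ := Nat.exists_eq_succ_of_ne_zero hq0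
  have hα : P * ((m+1 : ℕ) : Ordinal) + α % P = α := by
    rw [← hn]; exact Ordinal.div_add_mod α P
  have h1m : (1 : Ordinal) + (m : ℕ) = ((m : ℕ) + 1) := by
    rw [← Nat.cast_one, ← Nat.cast_add, ← Nat.cast_add, Nat.add_comm]
  have hsub : α - P = P * (m : ℕ) + α % P := by
    have key : P + (P * (m : ℕ) + α % P) = α := by
      rw [← add_assoc]
      have e1 : P * ((1:Ordinal) + (m:ℕ)) = P + P * (m:ℕ) := by rw [mul_add, mul_one]
      rw [← e1, h1m]
      have e2 : ((m:ℕ) + (1:Ordinal)) = (((m+1 : ℕ)) : Ordinal) := by norm_cast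
      rw [e2, hα]
    conv_lhs => rw [← key]
    exact Ordinal.add_sub_cancel _ _
  have hdiv : (α - P) / P = (m : ℕ) := by
    rw [hsub, Ordinal.mul_add_div _ hP, Ordinal.div_eq_zero_of_lt hmod, add_zero]
  have hdiv2 : α / P = ((m+1 : ℕ) : Ordinal) := hn
  rw [cOf, cOf, hdiv, hdiv2, Ordinal.card_nat, Ordinal.card_nat, Cardinal.toNat_natCast,
    Cardinal.toNat_natCast]

/-- The upper level set of a non-increasing function is ord-connected hence measurable. -/
lemma upper_measurable {g : ℝ → Ordinal} (hNI : NonIncr g) (α : Ordinal) :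
    MeasurableSet {t : ℝ | 0 < t ∧ α ≤ g t} := by
  apply Set.OrdConnected.measurableSet
  constructor
  intro x hx y hy z hz
  exact ⟨lt_of_lt_of_le hx.1 hz.1, hy.2.trans (hNI z y (lt_of_lt_of_le hx.1 hz.1) hz.2)⟩

lemma lev_eq_diff (g : ℝ → Ordinal) (α : Ordinal) :
    lev g α = {t : ℝ | 0 < t ∧ α ≤ g t} \ {t : ℝ | 0 < t ∧ α + 1 ≤ g t} := by
  ext t
  simp only [lev, mem_setOf_eq, mem_diff, not_and, not_le]
  constructor
  · rintro ⟨ht, rfl⟩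
    exact ⟨⟨ht, le_rfl⟩, fun _ => by rw [add_one_eq_succ]; exact Order.lt_succ _⟩
  · rintro ⟨⟨ht, h1⟩, h2⟩
    refine ⟨ht, le_antisymm ?_ h1⟩
    have := h2 ht
    rwa [add_one_eq_succ, Order.lt_succ_iff] at this

lemma lev_measurable {g : ℝ → Ordinal} (hNI : NonIncr g) (α : Ordinal) :
    MeasurableSet (lev g α) := by
  rw [lev_eq_diff]
  exact (upper_measurable hNI α).diff (upper_measurable hNI (α + 1))

lemma nonIncr_sub {g : ℝ → Ordinal} (hNI : NonIncr g) (γ : Ordinal) :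
    NonIncr (fun t => g t - γ) := by
  intro s t hs hst
  exact Ordinal.sub_le.2 ((hNI s t hs hst).trans (Ordinal.le_add_sub _ _))

lemma lev_subInd_eq (g : ℝ → Ordinal) (γ : Ordinal) (ε : ℝ) (α : Ordinal) :
    lev (subInd g γ (Set.Ioc 0 ε)) α
      = (Set.Ioc 0 ε ∩ lev (fun t => g t - γ) α) ∪ (Set.Ioi ε ∩ lev g α) := by
  ext t
  simp only [lev, subInd, mem_setOf_eq, mem_union, mem_inter_iff]
  by_cases h : t ∈ Set.Ioc 0 ε
  · rw [if_pos h]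
    have h' := h; rw [Set.mem_Ioc] at h'
    constructor
    · rintro ⟨ht, he⟩; exact Or.inl ⟨h, ht, he⟩
    · rintro (⟨_, ht, he⟩ | ⟨he, _⟩)
      · exact ⟨ht, he⟩
      · rw [Set.mem_Ioi] at he; exact absurd h'.2 (not_le.2 he)
  · rw [if_neg h]
    have h' := h; rw [Set.mem_Ioc] at h'; push_neg at h'
    constructor
    · rintro ⟨ht, he⟩
      refine Or.inr ⟨?_, ht, he⟩
      rw [Set.mem_Ioi]; exact h' ht
    · rintro (⟨hm, ht, _⟩ | ⟨_, ht, hh⟩)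
      · exact absurd hm h
      · exact ⟨ht, hh⟩

lemma lev_subInd_measurable {g : ℝ → Ordinal} (hNI : NonIncr g) (γ : Ordinal) (ε : ℝ)
    (α : Ordinal) : MeasurableSet (lev (subInd g γ (Set.Ioc 0 ε)) α) := by
  rw [lev_subInd_eq]
  exact (measurableSet_Ioc.inter (lev_measurable (nonIncr_sub hNI γ) α)).union
    (measurableSet_Ioi.inter (lev_measurable hNI α))

lemma lev_disjoint (g : ℝ → Ordinal) {α α' : Ordinal} (h : α ≠ α') :
    Disjoint (lev g α) (lev g α') := by
  rw [Set.disjoint_left]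
  rintro t ⟨_, rfl⟩ ⟨_, h2⟩
  exact h h2

noncomputable def stepFun : List (Ordinal × ℝ) → ℝ → Ordinal
  | [], _ => 0
  | (a, m) :: l, t => if t ≤ m then a else stepFun l (t - m)

def GoodList (l : List (Ordinal × ℝ)) : Prop :=
  (∀ p ∈ l, 0 ≤ p.2 ∧ p.1 ≠ 0) ∧ (l.map Prod.fst).Pairwise (· > ·)

lemma goodList_tail {p : Ordinal × ℝ} {l : List (Ordinal × ℝ)} (h : GoodList (p :: l)) :
    GoodList l :=
  ⟨fun q hq => h.1 q (List.mem_cons_of_mem _ hq), (List.pairwise_cons.1 h.2).2⟩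

lemma stepFun_mem (l : List (Ordinal × ℝ)) (t : ℝ) :
    stepFun l t = 0 ∨ stepFun l t ∈ l.map Prod.fst := by
  induction l generalizing t with
  | nil => exact Or.inl rfl
  | cons p l ih =>
    obtain ⟨a, m⟩ := p
    rw [stepFun]
    split_ifs
    · exact Or.inr (List.mem_cons_self)
    · rcases ih (t - m) with h | h
      · exact Or.inl h
      · exact Or.inr (List.mem_cons_of_mem _ h)

lemma stepFun_nonIncr {l : List (Ordinal × ℝ)} (h : GoodList l) : NonIncr (stepFun l) := by
  induction l with
  | nil => intro s t _ _; exact le_rfl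
  | cons p l ih =>
    obtain ⟨a, m⟩ := p
    intro s t hs hst
    rw [stepFun, stepFun]
    have hhead := (List.pairwise_cons.1 h.2).1
    split_ifs with h1 h2 h2
    · exact le_rfl
    · exact absurd (hst.trans h1) h2
    · rcases stepFun_mem l (t - m) with hv | hv
      · rw [hv]; exact zero_le
      · exact le_of_lt (hhead _ hv)
    · push_neg at h2
      exact ih (goodList_tail h) (s - m) (t - m) (by linarith) (by linarith)

lemma stepFun_leftCont {l : List (Ordinal × ℝ)} (h : GoodList l) : LeftCont (stepFun l) := by
  induction l with
  | nil => intro t ht; exact ⟨1, one_pos, fun _ _ _ => rfl⟩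
  | cons p l ih =>
    obtain ⟨a, m⟩ := p
    intro t ht
    by_cases htm : t ≤ m
    · refine ⟨t, ht, fun s hs1 hs2 => ?_⟩
      rw [stepFun, stepFun, if_pos htm, if_pos (hs2.trans htm)]
    · push_neg at htm
      obtain ⟨δ, hδ, hδ2⟩ := ih (goodList_tail h) (t - m) (by linarith)
      refine ⟨min δ (t - m), lt_min hδ (by linarith), fun s hs1 hs2 => ?_⟩
      have hsm : m < s := by
        have := min_le_right δ (t - m)
        have : t - min δ (t - m) ≥ t - (t - m) := by linarith [min_le_right δ (t-m)]
        linarith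
      rw [stepFun, stepFun, if_neg (not_le.2 hsm), if_neg (not_le.2 htm)]
      refine hδ2 (s - m) ?_ (by linarith)
      have := min_le_left δ (t - m)
      linarith

lemma stepFun_vanishes {l : List (Ordinal × ℝ)} (h : GoodList l) :
    VanishesBeyond (stepFun l) ((l.map Prod.snd).sum) := by
  induction l with
  | nil => intro t _; rfl
  | cons p l ih =>
    obtain ⟨a, m⟩ := p
    intro t ht
    simp only [List.map_cons, List.sum_cons] at ht
    have hm : 0 ≤ m := (h.1 (a, m) (List.mem_cons_self)).1
    have hsum : 0 ≤ (l.map Prod.snd).sum := by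
      apply List.sum_nonneg
      intro x hx
      obtain ⟨q, hq, rfl⟩ := List.mem_map.1 hx
      exact (h.1 q (List.mem_cons_of_mem _ hq)).1
    rw [stepFun, if_neg (by push_neg; linarith)]
    exact ih (goodList_tail h) (t - m) (by linarith)

lemma stepFun_finiteRange (l : List (Ordinal × ℝ)) : FiniteRange (stepFun l) := by
  apply Set.Finite.subset (((l.map Prod.fst).toFinset.finite_toSet).insert 0)
  rintro x ⟨t, _, rfl⟩
  rcases stepFun_mem l t with h | h
  · rw [h]; exact Set.mem_insert _ _
  · exact Set.mem_insert_iff.2 (Or.inr (by simpa using h))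

lemma lev_stepFun_head {a : Ordinal} {m : ℝ} {l : List (Ordinal × ℝ)}
    (h : GoodList ((a, m) :: l)) :
    lev (stepFun ((a, m) :: l)) a = Set.Ioc 0 m := by
  have hm : 0 ≤ m := (h.1 (a, m) (List.mem_cons_self)).1
  have hhead := (List.pairwise_cons.1 h.2).1
  have ha : a ≠ 0 := (h.1 (a, m) (List.mem_cons_self)).2
  ext t
  simp only [lev, mem_setOf_eq, Set.mem_Ioc, stepFun]
  constructor
  · rintro ⟨ht, hv⟩
    refine ⟨ht, ?_⟩
    by_contra hc
    push_neg at hc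
    rw [if_neg (not_le.2 hc)] at hv
    rcases stepFun_mem l (t - m) with h0 | h0
    · exact ha (hv.symm.trans h0)
    · exact absurd (hv ▸ h0) (by intro hmem; exact absurd rfl (ne_of_gt (hhead a hmem)))
  · rintro ⟨ht, htm⟩
    exact ⟨ht, if_pos htm⟩

lemma lev_stepFun_tail {a α : Ordinal} {m : ℝ} {l : List (Ordinal × ℝ)}
    (hm : 0 ≤ m) (hne : α ≠ a) :
    lev (stepFun ((a, m) :: l)) α = (fun t => t - m) ⁻¹' lev (stepFun l) α := by
  ext t
  simp only [lev, mem_setOf_eq, Set.mem_preimage, stepFun]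
  constructor
  · rintro ⟨ht, hv⟩
    by_cases htm : t ≤ m
    · rw [if_pos htm] at hv; exact absurd hv.symm hne
    · push_neg at htm
      rw [if_neg (not_le.2 htm)] at hv
      exact ⟨by linarith, hv⟩
  · rintro ⟨ht, hv⟩
    have htm : m < t := by linarith
    exact ⟨by linarith, by rw [if_neg (not_le.2 htm)]; exact hv⟩

lemma vol_preimage_sub (m : ℝ) (S : Set ℝ) :
    volume ((fun t => t - m) ⁻¹' S) = volume S := by
  have : (fun t : ℝ => t - m) = (fun t : ℝ => t + (-m)) := funext fun t => sub_eq_add_neg t m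
  rw [this]
  exact measure_preimage_add_right volume (-m) S

lemma vol_lev_stepFun_mem {l : List (Ordinal × ℝ)} (h : GoodList l) {a : Ordinal} {m : ℝ}
    (hmem : (a, m) ∈ l) : volume (lev (stepFun l) a) = ENNReal.ofReal m := by
  induction l with
  | nil => exact absurd hmem (List.not_mem_nil)
  | cons p l ih =>
    obtain ⟨b, k⟩ := p
    rcases List.mem_cons.1 hmem with heq | hmem'
    · injection heq with h1 h2
      subst h1; subst h2
      rw [lev_stepFun_head h, Real.volume_Ioc]
      norm_num
    · have hne : a ≠ b := by
        have := (List.pairwise_cons.1 h.2).1 a (List.mem_map.2 ⟨(a, m), hmem', rfl⟩)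
        exact ne_of_lt this
      rw [lev_stepFun_tail (h.1 (b, k) (List.mem_cons_self)).1 hne, vol_preimage_sub]
      exact ih (goodList_tail h) hmem'

lemma vol_lev_stepFun_not_mem {l : List (Ordinal × ℝ)} (h : GoodList l) {α : Ordinal}
    (hα0 : α ≠ 0) (hα : α ∉ l.map Prod.fst) : volume (lev (stepFun l) α) = 0 := by
  induction l with
  | nil =>
    have he : lev (stepFun []) α = ∅ := by
      ext t
      simp only [lev, mem_setOf_eq, Set.mem_empty_iff_false, iff_false, not_and]
      intro _ hc
      exact hα0 (hc.symm.trans rfl)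
    rw [he, measure_empty]
  | cons p l ih =>
    obtain ⟨b, k⟩ := p
    have hne : α ≠ b := by
      intro hc; apply hα; rw [hc]; simp
    rw [lev_stepFun_tail (h.1 (b, k) (List.mem_cons_self)).1 hne, vol_preimage_sub]
    exact ih (goodList_tail h)
      (fun hc => hα (by simp only [List.map_cons, List.mem_cons]; exact Or.inr hc))

lemma exists_rearrangement (u : ℝ → Ordinal) (V : Finset Ordinal) (h0 : (0:Ordinal) ∉ V)
    (hcover : ∀ α : Ordinal, α ≠ 0 → α ∉ V → volume (lev u α) = 0)
    (hfin : ∀ α ∈ V, volume (lev u α) ≠ ⊤) :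
    ∃ G : ℝ → Ordinal, NonIncr G ∧ LeftCont G ∧ FiniteRange G ∧
      (∃ A : ℝ, VanishesBeyond G A) ∧
      (∀ α : Ordinal, α ≠ 0 → volume (lev G α) = volume (lev u α)) ∧
      (∀ t : ℝ, G t = 0 ∨ G t ∈ V) := by
  set l : List (Ordinal × ℝ) :=
    (V.sort (· ≥ ·)).map (fun α => (α, (volume (lev u α)).toReal)) with hl
  have hfst : l.map Prod.fst = V.sort (· ≥ ·) := by
    rw [hl, List.map_map]
    have : (Prod.fst ∘ fun α : Ordinal => (α, (volume (lev u α)).toReal)) = id := rfl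
    rw [this, List.map_id]
  have hgood : GoodList l := by
    constructor
    · rintro p hp
      obtain ⟨α, hα, rfl⟩ := List.mem_map.1 hp
      refine ⟨ENNReal.toReal_nonneg, ?_⟩
      intro hc
      exact h0 (hc ▸ (Finset.mem_sort (α := Ordinal) (· ≥ ·)).1 hα)
    · rw [hfst]
      exact (Finset.sortedGT_sort V).pairwise
  refine ⟨stepFun l, stepFun_nonIncr hgood, stepFun_leftCont hgood, stepFun_finiteRange l,
    ⟨_, stepFun_vanishes hgood⟩, ?_, ?_⟩
  · intro α hα
    by_cases hmem : α ∈ V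
    · have hm : (α, (volume (lev u α)).toReal) ∈ l :=
        List.mem_map.2 ⟨α, (Finset.mem_sort (α := Ordinal) (· ≥ ·)).2 hmem, rfl⟩
      rw [vol_lev_stepFun_mem hgood hm, ENNReal.ofReal_toReal (hfin α hmem)]
    · have h1 : α ∉ l.map Prod.fst := by
        rw [hfst]
        exact fun hc => hmem ((Finset.mem_sort (α := Ordinal) (· ≥ ·)).1 hc)
      rw [vol_lev_stepFun_not_mem hgood hα h1, hcover α hα hmem]
  · intro t
    rcases stepFun_mem l t with h | h
    · exact Or.inl h
    · right
      rw [hfst] at h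
      exact (Finset.mem_sort (α := Ordinal) (· ≥ ·)).1 h

open scoped ENNReal

def Dset (g : ℝ → Ordinal) (β : Ordinal) : Set ℝ := {t | 0 < t ∧ ω ^ (β+1) ≤ g t}

def IsCover (g : ℝ → Ordinal) (V : Finset Ordinal) : Prop :=
  (0:Ordinal) ∉ V ∧ ∀ t : ℝ, 0 < t → g t ≠ 0 → g t ∈ V

noncomputable def Wsum (β : Ordinal) (g : ℝ → Ordinal) (V : Finset Ordinal) : ℝ≥0∞ :=
  ∑ α ∈ V, (cOf β α : ℝ≥0∞) * volume (lev g α)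

noncomputable def cfun (β : Ordinal) (g : ℝ → Ordinal) : ℝ → ℝ≥0∞ :=
  fun t => if 0 < t then (cOf β (g t) : ℝ≥0∞) else 0

lemma cfun_eq_sum (β : Ordinal) (g : ℝ → Ordinal) (V : Finset Ordinal) (hc : IsCover g V) :
    cfun β g = fun t => ∑ α ∈ V, (lev g α).indicator (fun _ => (cOf β α : ℝ≥0∞)) t := by
  funext t
  rcases le_or_gt t 0 with ht | ht
  · rw [cfun, if_neg (not_lt.2 ht)]
    symm
    apply Finset.sum_eq_zero
    intro α _
    apply Set.indicator_of_notMem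
    exact fun hm => absurd hm.1 (not_lt.2 ht)
  · rw [cfun, if_pos ht]
    by_cases h0 : g t = 0
    · rw [h0, cOf_zero, Nat.cast_zero]
      symm
      apply Finset.sum_eq_zero
      intro α hα
      apply Set.indicator_of_notMem
      rintro ⟨_, hm⟩
      have hz : α = 0 := hm.symm.trans h0
      exact hc.1 (hz ▸ hα)
    · have hsingle : ∑ α ∈ V, (lev g α).indicator (fun _ => (cOf β α : ℝ≥0∞)) t
          = (lev g (g t)).indicator (fun _ => (cOf β (g t) : ℝ≥0∞)) t :=
        Finset.sum_eq_single_of_mem _ (hc.2 t ht h0)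
          (fun α _ hne => Set.indicator_of_notMem (fun hm => hne hm.2.symm) _)
      rw [hsingle]
      exact (Set.indicator_of_mem (show t ∈ lev g (g t) from ⟨ht, rfl⟩) (fun _ => (cOf β (g t) : ℝ≥0∞))).symm

lemma cfun_measurable {β : Ordinal} {g : ℝ → Ordinal} {V : Finset Ordinal} (hc : IsCover g V)
    (hm : ∀ α : Ordinal, MeasurableSet (lev g α)) : Measurable (cfun β g) := by
  rw [cfun_eq_sum β g V hc]
  exact Finset.measurable_sum _ (fun α _ => (measurable_const.indicator (hm α)))

lemma Wsum_eq_lintegral (β : Ordinal) (g : ℝ → Ordinal) (V : Finset Ordinal) (hc : IsCover g V)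
    (hm : ∀ α : Ordinal, MeasurableSet (lev g α)) :
    Wsum β g V = ∫⁻ t, cfun β g t := by
  rw [cfun_eq_sum β g V hc]
  rw [lintegral_finset_sum _ (fun α _ => (measurable_const.indicator (hm α)))]
  apply Finset.sum_congr rfl
  intro α _
  rw [lintegral_indicator (hm α), setLIntegral_const, mul_comm]

lemma isCover_mono {g : ℝ → Ordinal} {V V' : Finset Ordinal} (hc : IsCover g V)
    (hsub : V ⊆ V') (h0 : (0:Ordinal) ∉ V') : IsCover g V' :=
  ⟨h0, fun t ht hne => hsub (hc.2 t ht hne)⟩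

lemma exists_cover {g : ℝ → Ordinal} (hFR : FiniteRange g) : ∃ V, IsCover g V := by
  refine ⟨hFR.toFinset.erase 0, Finset.notMem_erase _ _, fun t ht hne => ?_⟩
  exact Finset.mem_erase.2 ⟨hne, hFR.mem_toFinset.2 ⟨t, ht, rfl⟩⟩

lemma lev_subset_Ioc {g : ℝ → Ordinal} {A : ℝ} (hvan : VanishesBeyond g A) {α : Ordinal}
    (hα : α ≠ 0) : lev g α ⊆ Set.Ioc 0 (max A 0) := by
  rintro t ⟨ht, hm⟩
  refine ⟨ht, ?_⟩
  by_contra hc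
  push_neg at hc
  have hz := hvan t (lt_of_le_of_lt (le_max_left A 0) hc)
  rw [hz] at hm
  exact hα hm.symm

lemma vol_lev_ne_top {g : ℝ → Ordinal} {A : ℝ} (hvan : VanishesBeyond g A) {α : Ordinal}
    (hα : α ≠ 0) : volume (lev g α) ≠ ⊤ :=
  ne_top_of_le_ne_top (by rw [Real.volume_Ioc]; exact ENNReal.ofReal_ne_top)
    (measure_mono (lev_subset_Ioc hvan hα))

lemma Wsum_ne_top {g : ℝ → Ordinal} {A : ℝ} (hvan : VanishesBeyond g A) {β : Ordinal}
    {V : Finset Ordinal} (h0 : (0:Ordinal) ∉ V) : Wsum β g V ≠ ⊤ := by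
  rw [Wsum]
  refine (ENNReal.sum_lt_top.2 fun α hα => ?_).ne
  exact (ENNReal.mul_ne_top (ENNReal.natCast_ne_top _)
    (vol_lev_ne_top hvan (fun hc => h0 (hc ▸ hα)))).lt_top

def InvSt (g : ℝ → Ordinal) : Prop :=
  NonIncr g ∧ LeftCont g ∧ FiniteRange g ∧ ∃ A : ℝ, VanishesBeyond g A

lemma step_lemma {ε : ℝ} (hε : 0 < ε) {g : ℝ → Ordinal} (hInv : InvSt g) (h0 : g ε ≠ 0) :
    ∃ G : ℝ → Ordinal, InvSt G ∧
      IsRearrangement G (subInd g ((ω:Ordinal) ^ log ω (g ε)) (Set.Ioc 0 ε)) ∧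
      log ω (G ε) ≤ log ω (g ε) ∧
      volume (Dset G (log ω (g ε))) ≤ volume (Dset g (log ω (g ε))) ∧
      volume (Dset g (log ω (g ε))) < ENNReal.ofReal ε ∧
      (∀ V V' : Finset Ordinal, IsCover g V → IsCover G V' →
        Wsum (log ω (g ε)) G V' + (ENNReal.ofReal ε - volume (Dset g (log ω (g ε))))
          = Wsum (log ω (g ε)) g V) := by
  obtain ⟨hNI, hLC, hFR, A, hvan⟩ := hInv
  set β := log ω (g ε) with hβ
  set γ := (ω:Ordinal) ^ β with hγ
  set u := subInd g γ (Set.Ioc 0 ε) with hu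
  have hule : ∀ t ∈ Set.Ioc 0 ε, u t = g t - γ := by
    intro t ht; rw [hu]; unfold subInd; rw [if_pos ht]
  have hune : ∀ t : ℝ, t ∉ Set.Ioc 0 ε → u t = g t := by
    intro t ht; rw [hu]; unfold subInd; rw [if_neg ht]
  have hβ1 : γ ≤ g ε := Ordinal.opow_log_le_self ω h0
  have hβ2 : g ε < ω ^ (β + 1) := by
    rw [add_one_eq_succ]
    exact Ordinal.lt_opow_succ_log_self Ordinal.one_lt_omega0 _
  have hge : ∀ t : ℝ, t ∈ Set.Ioc 0 ε → g ε ≤ g t := fun t ht => hNI t ε ht.1 ht.2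
  have hugt : ∀ t : ℝ, ε < t → u t = g t := by
    intro t ht; exact hune t (fun hc => absurd hc.2 (not_le.2 ht))
  have habs : ∀ t ∈ Set.Ioc 0 ε, ω ^ (β+1) ≤ g t → u t = g t := by
    intro t ht hd; rw [hule t ht, hγ, omega_absorb hd]
  have hu_le_g : ∀ t : ℝ, 0 < t → u t ≤ g t := by
    intro t _
    by_cases hm : t ∈ Set.Ioc 0 ε
    · rw [hule t hm]; exact Ordinal.sub_le_self _ _
    · rw [hune t hm]
  have hDmeas : MeasurableSet (Dset g β) := upper_measurable hNI _
  obtain ⟨δ₀, hδ₀, hδ⟩ := hLC ε hε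
  set δ := min δ₀ ε with hδdef
  have hδpos : 0 < δ := lt_min hδ₀ hε
  have hDsub' : Dset g β ⊆ Set.Ioc 0 (ε - δ) := by
    rintro t ⟨ht, hd⟩
    refine ⟨ht, ?_⟩
    by_contra hcc
    push_neg at hcc
    have hgt : g ε < g t := lt_of_lt_of_le hβ2 hd
    rcases le_or_gt t ε with h1 | h1
    · have := hδ t (by have := min_le_left δ₀ ε; linarith) h1
      rw [this] at hgt; exact lt_irrefl _ hgt
    · exact absurd (hNI ε t hε h1.le) (not_le.2 hgt)
  have hDIoc : Dset g β ⊆ Set.Ioc 0 ε :=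
    hDsub'.trans (Set.Ioc_subset_Ioc_right (by linarith))
  have hDlt : volume (Dset g β) < ENNReal.ofReal ε := by
    apply lt_of_le_of_lt (measure_mono hDsub')
    rw [Real.volume_Ioc, _root_.sub_zero]
    exact (ENNReal.ofReal_lt_ofReal_iff hε).2 (by linarith)
  have hDne : volume (Dset g β) ≠ ⊤ := (hDlt.trans ENNReal.ofReal_lt_top).ne
  have hDu : Dset u β = Dset g β := by
    ext t
    constructor
    · rintro ⟨ht, hd⟩
      exact ⟨ht, hd.trans (hu_le_g t ht)⟩
    · rintro ⟨ht, hd⟩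
      refine ⟨ht, ?_⟩
      by_cases hm : t ∈ Set.Ioc 0 ε
      · rw [habs t hm hd]; exact hd
      · rw [hune t hm]; exact hd
  have hFRu : FiniteRange u := by
    apply Set.Finite.subset ((hFR.image (fun α => α - γ)).union hFR)
    rintro x ⟨t, ht, rfl⟩
    by_cases hm : t ∈ Set.Ioc 0 ε
    · rw [hule t hm]; exact Set.mem_union_left _ ⟨g t, ⟨t, ht, rfl⟩, rfl⟩
    · rw [hune t hm]; exact Set.mem_union_right _ ⟨t, ht, rfl⟩
  have hvanu : VanishesBeyond u (max A ε) := by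
    intro t ht
    rw [hugt t (lt_of_le_of_lt (le_max_right A ε) ht)]
    exact hvan t (lt_of_le_of_lt (le_max_left A ε) ht)
  obtain ⟨Vu, hVu⟩ := exists_cover hFRu
  have hfinu : ∀ α ∈ Vu, volume (lev u α) ≠ ⊤ := fun α hα =>
    vol_lev_ne_top hvanu (fun hc => hVu.1 (hc ▸ hα))
  have hcovu : ∀ α : Ordinal, α ≠ 0 → α ∉ Vu → volume (lev u α) = 0 := by
    intro α hα hnm
    have hemp : lev u α = ∅ := by
      ext t
      simp only [lev, mem_setOf_eq, Set.mem_empty_iff_false, iff_false, not_and]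
      intro ht hm
      have hmem := hVu.2 t ht (by rw [hm]; exact hα)
      rw [hm] at hmem
      exact hnm hmem
    rw [hemp, measure_empty]
  obtain ⟨G, hGNI, hGLC, hGFR, ⟨AG, hGvan⟩, hGvol, hGval⟩ :=
    exists_rearrangement u Vu hVu.1 hcovu hfinu
  have hrearr : IsRearrangement G u := ⟨hGNI, hGLC, fun α hα => hGvol α hα.ne'⟩
  have hmu : ∀ α : Ordinal, MeasurableSet (lev u α) := lev_subInd_measurable hNI γ ε
  have hmG : ∀ α : Ordinal, MeasurableSet (lev G α) := lev_measurable hGNI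
  have hmg : ∀ α : Ordinal, MeasurableSet (lev g α) := lev_measurable hNI
  have hDG : volume (Dset G β) ≤ volume (Dset g β) := by
    classical
    set F := Vu.filter (fun α => ω ^ (β+1) ≤ α) with hF
    have hFne : ∀ α ∈ F, α ≠ 0 := fun α hα =>
      fun hc => hVu.1 (hc ▸ (Finset.mem_filter.1 hα).1)
    have h1 : Dset G β = ⋃ α ∈ F, lev G α := by
      ext t
      simp only [Set.mem_iUnion, exists_prop]
      constructor
      · rintro ⟨ht, hd⟩
        have hne : G t ≠ 0 := by
          intro hz
          rw [hz] at hd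
          exact opow_ne_zero (β+1) omega0_ne_zero (nonpos_iff_eq_zero.1 hd)
        rcases hGval t with hz | hmem
        · exact absurd hz hne
        · exact ⟨G t, Finset.mem_filter.2 ⟨hmem, hd⟩, ht, rfl⟩
      · rintro ⟨α, hmem, ht, rfl⟩
        exact ⟨ht, (Finset.mem_filter.1 hmem).2⟩
    have hdisjG : (↑F : Set Ordinal).PairwiseDisjoint (lev G) :=
      fun a _ b _ hab => lev_disjoint G hab
    have hdisju : (↑F : Set Ordinal).PairwiseDisjoint (lev u) :=
      fun a _ b _ hab => lev_disjoint u hab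
    have h2 : volume (Dset G β) = ∑ α ∈ F, volume (lev G α) := by
      rw [h1]; exact measure_biUnion_finset hdisjG (fun α _ => hmG α)
    have h3 : ∑ α ∈ F, volume (lev G α) = ∑ α ∈ F, volume (lev u α) :=
      Finset.sum_congr rfl (fun α hα => hGvol α (hFne α hα))
    have h4 : ∑ α ∈ F, volume (lev u α) = volume (⋃ α ∈ F, lev u α) :=
      (measure_biUnion_finset hdisju (fun α _ => hmu α)).symm
    have h5 : (⋃ α ∈ F, lev u α) ⊆ Dset u β := by
      rintro t ht
      simp only [Set.mem_iUnion, exists_prop] at ht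
      obtain ⟨α, hmem, ht0, hval⟩ := ht
      refine ⟨ht0, ?_⟩
      rw [hval]
      exact (Finset.mem_filter.1 hmem).2
    rw [h2, h3, h4]
    calc volume (⋃ α ∈ F, lev u α) ≤ volume (Dset u β) := measure_mono h5
    _ = volume (Dset g β) := by rw [hDu]
  have hlog : log ω (G ε) ≤ β := by
    by_contra hcc
    push_neg at hcc
    have hGε : G ε ≠ 0 := by
      intro hz
      rw [hz, Ordinal.log_zero_right] at hcc
      exact absurd hcc (not_lt_of_ge zero_le)
    have hGd : ω ^ (β+1) ≤ G ε := by
      rw [add_one_eq_succ]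
      exact (Ordinal.opow_le_iff_le_log Ordinal.one_lt_omega0 hGε).2 (Order.succ_le_iff.2 hcc)
    have hsub2 : Set.Ioc 0 ε ⊆ Dset G β := by
      rintro t ⟨ht, hte⟩
      exact ⟨ht, hGd.trans (hGNI t ε ht hte)⟩
    have hbig : ENNReal.ofReal ε ≤ volume (Dset G β) := by
      calc ENNReal.ofReal ε = volume (Set.Ioc (0:ℝ) ε) := by rw [Real.volume_Ioc, _root_.sub_zero]
      _ ≤ _ := measure_mono hsub2
    exact absurd (lt_of_le_of_lt (hbig.trans hDG) hDlt) (lt_irrefl _)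
  have hWeq : ∀ V V' : Finset Ordinal, IsCover g V → IsCover G V' →
      Wsum β G V' + (ENNReal.ofReal ε - volume (Dset g β)) = Wsum β g V := by
    intro V V' hcV hcV'
    have h0union : (0:Ordinal) ∉ V' ∪ Vu := by
      rw [Finset.mem_union]
      rintro (h | h)
      · exact hcV'.1 h
      · exact hVu.1 h
    have hcV'' : IsCover G (V' ∪ Vu) := isCover_mono hcV' Finset.subset_union_left h0union
    have hcu'' : IsCover u (V' ∪ Vu) := isCover_mono hVu Finset.subset_union_right h0union
    have hWGu : Wsum β G V' = Wsum β u Vu := by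
      rw [Wsum_eq_lintegral β G V' hcV' hmG, ← Wsum_eq_lintegral β G (V' ∪ Vu) hcV'' hmG,
        Wsum_eq_lintegral β u Vu hVu hmu, ← Wsum_eq_lintegral β u (V' ∪ Vu) hcu'' hmu]
      unfold Wsum
      apply Finset.sum_congr rfl
      intro α hα
      rw [hGvol α (fun hc => h0union (hc ▸ hα))]
    have hpoint : ∀ t : ℝ,
        cfun β u t + (Set.Ioc 0 ε \ Dset g β).indicator 1 t = cfun β g t := by
      intro t
      rcases le_or_gt t 0 with ht | ht
      · rw [cfun, cfun, if_neg (not_lt.2 ht), if_neg (not_lt.2 ht),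
          Set.indicator_of_notMem (fun hm => absurd hm.1.1 (not_lt.2 ht)), add_zero]
      · by_cases hm : t ∈ Set.Ioc 0 ε
        · by_cases hd : ω ^ (β+1) ≤ g t
          · rw [cfun, cfun, if_pos ht, if_pos ht, habs t hm hd,
              Set.indicator_of_notMem (fun hmm => hmm.2 ⟨ht, hd⟩), add_zero]
          · have hc1 : ω ^ β ≤ g t := by
              rw [← hγ]; exact hβ1.trans (hge t hm)
            have hkey := cOf_sub hc1 (not_le.1 hd)
            rw [← hγ] at hkey
            rw [cfun, cfun, if_pos ht, if_pos ht, hule t hm,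
              Set.indicator_of_mem (show t ∈ Set.Ioc 0 ε \ Dset g β from
                ⟨hm, fun hdd => hd hdd.2⟩) 1, hkey, Pi.one_apply]
            push_cast
            ring
        · have hte : ε < t := by
            by_contra hno
            push_neg at hno
            exact hm ⟨ht, hno⟩
          rw [cfun, cfun, if_pos ht, if_pos ht, hugt t hte,
            Set.indicator_of_notMem (fun hmm => hm hmm.1), add_zero]
    have hWug : Wsum β u Vu + volume (Set.Ioc 0 ε \ Dset g β) = Wsum β g V := by
      rw [Wsum_eq_lintegral β u Vu hVu hmu, Wsum_eq_lintegral β g V hcV hmg,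
        ← lintegral_indicator_one (measurableSet_Ioc.diff hDmeas),
        ← lintegral_add_left (cfun_measurable hVu hmu)]
      exact lintegral_congr hpoint
    have hdiff : volume (Set.Ioc 0 ε \ Dset g β) = ENNReal.ofReal ε - volume (Dset g β) := by
      rw [measure_diff hDIoc hDmeas.nullMeasurableSet hDne, Real.volume_Ioc, _root_.sub_zero]
    rw [hWGu, ← hdiff]
    exact hWug
  exact ⟨G, ⟨hGNI, hGLC, hGFR, AG, hGvan⟩, hrearr, hlog, hDG, hDlt, hWeq⟩

def ChainP (ε : ℝ) (g : ℝ → Ordinal) (n : ℕ) (gs : ℕ → ℝ → Ordinal) (γs : ℕ → Ordinal) : Prop :=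
  gs 0 = g ∧ (∀ i ≤ n, InvSt (gs i)) ∧
  (∀ i j : ℕ, i ≤ j → j < n → γs j ≤ γs i) ∧
  (∀ i < n, ∃ β : Ordinal, γs i = (ω : Ordinal) ^ β) ∧
  (∀ i < n, γs i ≤ gs i ε) ∧
  (∀ i < n, IsRearrangement (gs (i+1)) (subInd (gs i) (γs i) (Set.Ioc 0 ε))) ∧
  gs n ε = 0

def Done (ε : ℝ) (g : ℝ → Ordinal) : Prop :=
  ∃ n gs γs, ChainP ε g n gs γs ∧ ∀ j < n, γs j ≤ (ω : Ordinal) ^ log ω (g ε)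

lemma done_zero {ε : ℝ} {g : ℝ → Ordinal} (h0 : g ε = 0) (hInv : InvSt g) : Done ε g := by
  refine ⟨0, fun _ => g, fun _ => 0, ⟨rfl, fun i _ => hInv, ?_, ?_, ?_, ?_, h0⟩, ?_⟩ <;>
    intro i <;> intros <;> omega

lemma done_prepend {ε : ℝ} {g G : ℝ → Ordinal} (hInv : InvSt g) (h0 : g ε ≠ 0)
    (hre : IsRearrangement G (subInd g ((ω:Ordinal) ^ log ω (g ε)) (Set.Ioc 0 ε)))
    (hlog : log ω (G ε) ≤ log ω (g ε)) (hD : Done ε G) : Done ε g := by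
  obtain ⟨n, gs, γs, ⟨hgs0, hinv, hmono, hpow, hle, hre', hend⟩, hbound⟩ := hD
  have hb2 : ∀ j < n, γs j ≤ (ω:Ordinal) ^ log ω (g ε) := fun j hj =>
    (hbound j hj).trans (Ordinal.opow_le_opow_right omega0_pos hlog)
  refine ⟨n + 1, fun i => if i = 0 then g else gs (i-1),
    fun i => if i = 0 then (ω:Ordinal) ^ log ω (g ε) else γs (i-1), ⟨?_, ?_, ?_, ?_, ?_, ?_, ?_⟩, ?_⟩
  · simp
  · intro i hi
    by_cases h : i = 0
    · simp [h, hInv]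
    · simp only [if_neg h]
      exact hinv (i-1) (by omega)
  · intro i j hij hj
    by_cases hi : i = 0
    · by_cases hjj : j = 0
      · simp [hi, hjj]
      · simp only [if_neg hjj, if_pos hi]
        exact hb2 (j-1) (by omega)
    · have hjj : j ≠ 0 := by omega
      simp only [if_neg hi, if_neg hjj]
      exact hmono (i-1) (j-1) (by omega) (by omega)
  · intro i hi
    by_cases h : i = 0
    · simp only [if_pos h]
      exact ⟨_, rfl⟩
    · simp only [if_neg h]
      exact hpow (i-1) (by omega)
  · intro i hi
    by_cases h : i = 0
    · simp only [if_pos h]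
      exact Ordinal.opow_log_le_self ω h0
    · simp only [if_neg h]
      exact hle (i-1) (by omega)
  · intro i hi
    by_cases h : i = 0
    · have : (1:ℕ) - 1 = 0 := rfl
      simp only [h, if_neg (by omega : ¬(0:ℕ)+1 = 0), if_pos rfl]
      rw [(by omega : 0 + 1 - 1 = 0), hgs0]
      exact hre
    · simp only [if_neg (by omega : ¬i+1 = 0), if_neg h]
      rw [(by omega : i + 1 - 1 = (i-1) + 1)]
      exact hre' (i-1) (by omega)
  · simp only [if_neg (by omega : ¬n+1 = 0)]
    rw [(by omega : n + 1 - 1 = n)]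
    exact hend
  · intro j hj
    by_cases h : j = 0
    · simp [h]
    · simp only [if_neg h]
      exact hb2 (j-1) (by omega)

lemma phase_lemma {ε : ℝ} (hε : 0 < ε) (β : Ordinal)
    (IH : ∀ β' < β, ∀ g : ℝ → Ordinal, InvSt g → log ω (g ε) = β' → Done ε g)
    (H₀ : ℝ≥0∞) (hH : H₀ < ENNReal.ofReal ε) :
    ∀ n : ℕ, ∀ g : ℝ → Ordinal, InvSt g → g ε ≠ 0 → log ω (g ε) = β →
      volume (Dset g β) ≤ H₀ →
      (∀ V : Finset Ordinal, IsCover g V → Wsum β g V ≤ n * (ENNReal.ofReal ε - H₀)) →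
      Done ε g := by
  intro n
  induction n with
  | zero =>
    intro g hInv h0 hlog hD hW
    exfalso
    obtain ⟨G, hGInv, hre, hlogG, hDG, hDlt, hWeq⟩ := step_lemma hε hInv h0
    rw [hlog] at hDG hDlt hWeq hlogG
    obtain ⟨V, hV⟩ := exists_cover hInv.2.2.1
    obtain ⟨V', hV'⟩ := exists_cover hGInv.2.2.1
    have heq := hWeq V V' hV hV'
    have hWg := hW V hV
    rw [Nat.cast_zero, zero_mul, le_zero_iff] at hWg
    rw [hWg] at heq
    have h2 : ENNReal.ofReal ε - volume (Dset g β) = 0 := (add_eq_zero.1 heq).2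
    have h3 : ENNReal.ofReal ε ≤ volume (Dset g β) := tsub_eq_zero_iff_le.1 h2
    exact absurd (h3.trans hD) (not_le.2 hH)
  | succ n ih =>
    intro g hInv h0 hlog hD hW
    obtain ⟨G, hGInv, hre, hlogG, hDG, hDlt, hWeq⟩ := step_lemma hε hInv h0
    have hre' := hre
    rw [hlog] at hDG hDlt hWeq hlogG
    have hprep : Done ε G → Done ε g := fun hd =>
      done_prepend hInv h0 hre' (by rw [hlog]; exact hlogG) hd
    by_cases hG0 : G ε = 0
    · exact hprep (done_zero hG0 hGInv)
    rcases lt_or_eq_of_le hlogG with hlt | heqβ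
    · exact hprep (IH _ hlt G hGInv rfl)
    · apply hprep
      apply ih G hGInv hG0 heqβ (hDG.trans hD)
      intro V' hV'
      obtain ⟨V, hV⟩ := exists_cover hInv.2.2.1
      have heq := hWeq V V' hV hV'
      have hWg := hW V hV
      have hmono : ENNReal.ofReal ε - H₀ ≤ ENNReal.ofReal ε - volume (Dset g β) :=
        tsub_le_tsub_left hD _
      have h1 : Wsum β G V' + (ENNReal.ofReal ε - H₀) ≤ (↑(n+1)) * (ENNReal.ofReal ε - H₀) :=
        le_trans (add_le_add_right hmono _) (le_trans (le_of_eq heq) hWg)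
      have hne : ENNReal.ofReal ε - H₀ ≠ ⊤ :=
        (lt_of_le_of_lt (tsub_le_self) ENNReal.ofReal_lt_top).ne
      have h2 : (↑(n+1) : ℝ≥0∞) * (ENNReal.ofReal ε - H₀)
          = ↑n * (ENNReal.ofReal ε - H₀) + (ENNReal.ofReal ε - H₀) := by
        push_cast
        ring
      rw [h2] at h1
      exact (ENNReal.add_le_add_iff_right hne).1 h1

lemma main_done {ε : ℝ} (hε : 0 < ε) :
    ∀ β : Ordinal, ∀ g : ℝ → Ordinal, InvSt g → log ω (g ε) ≤ β → Done ε g := by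
  intro β
  induction β using Ordinal.induction with
  | h β IH =>
    intro g hInv hle
    by_cases h0 : g ε = 0
    · exact done_zero h0 hInv
    rcases lt_or_eq_of_le hle with hlt | heq
    · exact IH _ hlt g hInv le_rfl
    · have hIH' : ∀ β' < β, ∀ g' : ℝ → Ordinal, InvSt g' → log ω (g' ε) = β' → Done ε g' :=
        fun β' hβ' g' hI hl => IH β' hβ' g' hI hl.le
      obtain ⟨G, hGInv, hre, hlogG, hDG, hDlt, hWeq⟩ := step_lemma hε hInv h0
      rw [heq] at hDlt
      set H₀ := volume (Dset g β) with hH₀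
      set c := ENNReal.ofReal ε - H₀ with hc
      have hc0 : c ≠ 0 := by
        rw [hc]
        exact (tsub_pos_of_lt hDlt).ne'
      have hctop : c ≠ ⊤ := (lt_of_le_of_lt (tsub_le_self) ENNReal.ofReal_lt_top).ne
      obtain ⟨V₀, hV₀⟩ := exists_cover hInv.2.2.1
      obtain ⟨A, hvan⟩ := hInv.2.2.2
      have hWfin : Wsum β g V₀ ≠ ⊤ := Wsum_ne_top hvan hV₀.1
      obtain ⟨n, hn⟩ := ENNReal.exists_nat_gt
        (ENNReal.mul_ne_top hWfin (ENNReal.inv_ne_top.2 hc0) :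
          Wsum β g V₀ * c⁻¹ ≠ ⊤)
      have hWn : Wsum β g V₀ ≤ n * c := by
        have hdiv : Wsum β g V₀ / c ≤ (n : ℝ≥0∞) := by
          rw [ENNReal.div_eq_inv_mul, mul_comm]
          exact hn.le
        calc Wsum β g V₀ = Wsum β g V₀ / c * c := by
              rw [ENNReal.div_mul_cancel hc0 hctop]
        _ ≤ n * c := mul_le_mul_left hdiv c
      have hmg : ∀ α : Ordinal, MeasurableSet (lev g α) := lev_measurable hInv.1
      have hWall : ∀ V : Finset Ordinal, IsCover g V → Wsum β g V ≤ n * c := by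
        intro V hV
        rw [Wsum_eq_lintegral β g V hV hmg, ← Wsum_eq_lintegral β g V₀ hV₀ hmg]
        exact hWn
      exact phase_lemma hε β hIH' H₀ hDlt n g hInv h0 heq le_rfl hWall

/-- Proposition 3.5, existence part. -/
theorem stmt_2 (ε t₀ : ℝ) (hε : 0 < ε) (g₀ : ℝ → Ordinal)
    (hNI : NonIncr g₀) (hLC : LeftCont g₀) (hFR : FiniteRange g₀) (hCV : CountableValued g₀)
    (hvan : ∀ t : ℝ, t₀ < t → g₀ t = 0) :
    ∃ (n : ℕ) (g : ℕ → ℝ → Ordinal) (γ : ℕ → Ordinal),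
      g 0 = g₀ ∧
      (∀ i ≤ n, NonIncr (g i) ∧ LeftCont (g i)) ∧
      (∀ i j : ℕ, i ≤ j → j < n → γ j ≤ γ i) ∧
      (∀ i < n, ∃ β : Ordinal, γ i = (ω : Ordinal) ^ β) ∧
      (∀ i < n, γ i ≤ g i ε) ∧
      (∀ i < n, IsRearrangement (g (i + 1)) (subInd (g i) (γ i) (Set.Ioc 0 ε))) ∧
      (∀ t : ℝ, ε ≤ t → g n t = 0) := by
  have hInv : InvSt g₀ := ⟨hNI, hLC, hFR, t₀, hvan⟩
  obtain ⟨n, gs, γs, ⟨hgs0, hinv, hmono, hpow, hle, hre, hend⟩, _⟩ :=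
    main_done hε (log ω (g₀ ε)) g₀ hInv le_rfl
  refine ⟨n, gs, γs, hgs0, fun i hi => ⟨(hinv i hi).1, (hinv i hi).2.1⟩, hmono, hpow, hle, hre, ?_⟩
  intro t ht
  have hNIn : NonIncr (gs n) := (hinv n le_rfl).1
  have := hNIn ε t hε ht
  rw [hend] at this
  exact nonpos_iff_eq_zero.1 this
end

section
/- Let γ be a countable ordinal, k a positive integer, and ε > 0. If g : (0,∞) → [0,ω₁) is non-increasing, left-continuous, satisfies g(t) ≤ ω^γ·k for all t, and g(t) = 0 for all t > 1, then C(g,ε) ≤ ω^γ·⌊k/ε⌋, where ⌊k/ε⌋ is the greatest integer not exceeding k/ε. -/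
open MeasureTheory Set Ordinal Filter
open scoped Classical

/-- `h` is an ε-compression of `g` (by some `γ`): for some `0 < γ ≤ g(ε)` and `f` the
non-increasing left-continuous rearrangement of `g − γ·1_{(0,ε]}`, one has `h = γ·1_{(0,ε]} + f`
on `(0,∞)`. -/
def IsCompression (ε : ℝ) (h g : ℝ → Ordinal) : Prop :=
  ∃ (γ : Ordinal) (f : ℝ → Ordinal), 0 < γ ∧ γ ≤ g ε ∧
    IsRearrangement f (subInd g γ (Set.Ioc 0 ε)) ∧
    (∀ t : ℝ, 0 < t → t ≤ ε → h t = γ + f t) ∧ (∀ t : ℝ, ε < t → h t = f t)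

/-- The set of values `h_n(ε)` over all finite chains `h₀ ≤ g`, `h_{i+1}` an ε-compression of
`h_i`, consisting of non-increasing left-continuous functions with finite range and bounded
support. -/
def AreaVals (ε : ℝ) (g : ℝ → Ordinal) : Set Ordinal :=
  {α | ∃ (n : ℕ) (f : ℕ → ℝ → Ordinal),
    (∀ i ≤ n, NonIncr (f i) ∧ LeftCont (f i) ∧ FiniteRange (f i) ∧
      ∃ A : ℝ, VanishesBeyond (f i) A) ∧
    (∀ t : ℝ, 0 < t → f 0 t ≤ g t) ∧
    (∀ i < n, IsCompression ε (f (i + 1)) (f i)) ∧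
    α = f n ε}

/-- The ε-area `C(g,ε)` under `g`. -/
noncomputable def Carea (ε : ℝ) (g : ℝ → Ordinal) : Ordinal := sSup (AreaVals ε g)

open scoped ENNReal

namespace Stmt10

/-- A set is *initial* if it contains, with each point, all smaller positive points. -/
def Initial (S : Set ℝ) : Prop := (∀ t ∈ S, (0:ℝ) < t) ∧ ∀ t ∈ S, ∀ s, 0 < s → s ≤ t → s ∈ S

lemma initial_rep {S : Set ℝ} (hS : Initial S) :
    S = Ioi 0 ∨ ∃ x : ℝ, 0 ≤ x ∧ (S = Ioo 0 x ∨ S = Ioc 0 x) := by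
  obtain ⟨h0, hdown⟩ := hS
  by_cases hbd : BddAbove S
  · rcases eq_empty_or_nonempty S with he | hne
    · right; exact ⟨0, le_refl 0, Or.inl (by rw [he, Ioo_self])⟩
    · right
      set x := sSup S with hx
      have hxmem : ∀ t ∈ S, t ≤ x := fun t ht => le_csSup hbd ht
      have hx0 : 0 ≤ x := by
        obtain ⟨t, ht⟩ := hne
        exact le_trans (le_of_lt (h0 t ht)) (hxmem t ht)
      have hIoo : Ioo 0 x ⊆ S := by
        intro t ht
        obtain ⟨s, hs, hts⟩ := exists_lt_of_lt_csSup hne ht.2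
        exact hdown s hs t ht.1 (le_of_lt hts)
      refine ⟨x, hx0, ?_⟩
      by_cases hxS : x ∈ S
      · right
        apply Subset.antisymm
        · intro t ht; exact ⟨h0 t ht, hxmem t ht⟩
        · intro t ht
          exact hdown x hxS t ht.1 ht.2
      · left
        apply Subset.antisymm
        · intro t ht
          refine ⟨h0 t ht, lt_of_le_of_ne (hxmem t ht) ?_⟩
          rintro rfl; exact hxS ht
        · exact hIoo
  · left
    apply Subset.antisymm
    · intro t ht; exact h0 t ht
    · intro t ht
      rw [not_bddAbove_iff] at hbd
      obtain ⟨s, hs, hts⟩ := hbd t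
      exact hdown s hs t ht (le_of_lt hts)

lemma initial_vol_Ioc {S : Set ℝ} (hS : Initial S) {ε : ℝ} (hε : 0 < ε) :
    volume (S ∩ Ioc 0 ε) = min (ENNReal.ofReal ε) (volume S) := by
  rcases initial_rep hS with h | ⟨x, hx0, h | h⟩
  · rw [h, inter_eq_self_of_subset_right Ioc_subset_Ioi_self, Real.volume_Ioc, Real.volume_Ioi]
    simp
  · subst h
    rcases le_or_gt x ε with hxe | hxe
    · have : Ioo 0 x ∩ Ioc 0 ε = Ioo 0 x := by
        apply inter_eq_self_of_subset_left
        intro t ht; exact ⟨ht.1, le_trans (le_of_lt ht.2) hxe⟩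
      rw [this]
      simp only [Real.volume_Ioo, _root_.sub_zero]
      rw [min_eq_right (ENNReal.ofReal_le_ofReal hxe)]
    · have : Ioo 0 x ∩ Ioc 0 ε = Ioc 0 ε := by
        apply inter_eq_self_of_subset_right
        intro t ht; exact ⟨ht.1, lt_of_le_of_lt ht.2 hxe⟩
      rw [this]
      simp only [Real.volume_Ioc, Real.volume_Ioo, _root_.sub_zero]
      rw [min_eq_left (ENNReal.ofReal_le_ofReal (le_of_lt hxe))]
  · subst h
    have : Ioc 0 x ∩ Ioc 0 ε = Ioc 0 (min x ε) := by
      ext t; simp [and_assoc, le_min_iff]; tauto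
    rw [this]
    simp only [Real.volume_Ioc, _root_.sub_zero]
    rw [min_comm (ENNReal.ofReal ε)]
    exact (Monotone.map_min (fun a b hab => ENNReal.ofReal_le_ofReal hab))

lemma initial_vol_Ioi {S : Set ℝ} (hS : Initial S) {ε : ℝ} (hε : 0 < ε) :
    volume (S ∩ Ioi ε) = volume S - ENNReal.ofReal ε := by
  rcases initial_rep hS with h | ⟨x, hx0, h | h⟩
  · have : Ioi (0:ℝ) ∩ Ioi ε = Ioi ε := inter_eq_self_of_subset_right (Ioi_subset_Ioi (le_of_lt hε))
    rw [h, this, Real.volume_Ioi, Real.volume_Ioi, ENNReal.top_sub ENNReal.ofReal_ne_top]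
  · subst h
    have : Ioo 0 x ∩ Ioi ε = Ioo ε x := by
      ext t
      simp only [mem_inter_iff, mem_Ioo, mem_Ioi]
      constructor
      · rintro ⟨⟨_, h2⟩, h3⟩; exact ⟨h3, h2⟩
      · rintro ⟨h1, h2⟩; exact ⟨⟨lt_trans hε h1, h2⟩, h1⟩
    rw [this]
    simp only [Real.volume_Ioo, _root_.sub_zero]
    rw [ENNReal.ofReal_sub _ (le_of_lt hε)]
  · subst h
    have : Ioc 0 x ∩ Ioi ε = Ioc ε x := by
      ext t
      simp only [mem_inter_iff, mem_Ioc, mem_Ioi]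
      constructor
      · rintro ⟨⟨_, h2⟩, h3⟩; exact ⟨h3, h2⟩
      · rintro ⟨h1, h2⟩; exact ⟨⟨lt_trans hε h1, h2⟩, h1⟩
    rw [this]
    simp only [Real.volume_Ioc, _root_.sub_zero]
    rw [ENNReal.ofReal_sub _ (le_of_lt hε)]

lemma vol_split {S : Set ℝ} (hS : ∀ t ∈ S, (0:ℝ) < t) (ε : ℝ) :
    volume S = volume (S ∩ Ioc 0 ε) + volume (S ∩ Ioi ε) := by
  rw [← measure_inter_add_diff S (measurableSet_Ioc (a := (0:ℝ)) (b := ε))]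
  have hd : S \ Ioc 0 ε = S ∩ Ioi ε := by
    ext t
    simp only [mem_diff, mem_inter_iff, mem_Ioc, mem_Ioi]
    constructor
    · rintro ⟨h1, h2⟩
      refine ⟨h1, ?_⟩
      by_contra hne
      push_neg at hne
      exact h2 ⟨hS t h1, hne⟩
    · rintro ⟨h1, h2⟩
      exact ⟨h1, fun hh => absurd h2 (not_lt.mpr hh.2)⟩
  rw [hd]

/-! ### Ordinal arithmetic helpers -/

section OrdinalFacts

variable {Ω : Ordinal} (hΩ : (0:Ordinal) < Ω) (habs : ∀ a < Ω, a + Ω = Ω)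

include hΩ habs in
lemma add_mul_nat {ρ : Ordinal} (hρ : ρ < Ω) {j : ℕ} (hj : 0 < j) :
    ρ + Ω * j = Ω * j := by
  obtain ⟨i, rfl⟩ := Nat.exists_eq_succ_of_ne_zero (Nat.pos_iff_ne_zero.mp hj)
  have : ((i + 1 : ℕ) : Ordinal) = 1 + (i : Ordinal) := by
    rw [Ordinal.one_add_natCast]
    exact Ordinal.natCast_succ i
  rw [this, mul_add, mul_one, ← add_assoc, habs ρ hρ]

include hΩ habs in
lemma gamma_add_mul {c : ℕ} {ρ : Ordinal} (hρ : ρ < Ω) {j : ℕ} (hj : 0 < j) :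
    (Ω * c + ρ) + Ω * j = Ω * (c + j : ℕ) := by
  rw [add_assoc, add_mul_nat hΩ habs hρ hj, ← mul_add]
  norm_cast

include hΩ in
lemma mul_lt_gamma {c : ℕ} {ρ : Ordinal} {m : ℕ} (hm : m < c) :
    Ω * m < Ω * c + ρ := by
  apply lt_of_lt_of_le _ (le_self_add)
  apply (mul_lt_mul_iff_right₀ hΩ).mpr
  exact_mod_cast Nat.cast_lt.mpr hm

end OrdinalFacts

/-! ### Measurability of level sets -/

lemma ordConnected_measurable {s : Set ℝ} (h : s.OrdConnected) : MeasurableSet s :=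
  h.measurableSet

lemma lev_measurable_of_nonIncr {f : ℝ → Ordinal} (hf : NonIncr f) (α : Ordinal) :
    MeasurableSet (lev f α) := by
  apply Set.OrdConnected.measurableSet
  constructor
  intro x hx y hy z hz
  have hx0 : (0:ℝ) < x := hx.1
  have hz0 : (0:ℝ) < z := lt_of_lt_of_le hx0 hz.1
  refine ⟨hz0, le_antisymm ?_ ?_⟩
  · rw [← hx.2]; exact hf x z hx0 hz.1
  · rw [← hy.2]; exact hf z y hz0 hz.2

/-- `{t | 0 < t ∧ β < f t}` is an initial set when `f` is non-increasing. -/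
lemma initial_gt {f : ℝ → Ordinal} (hf : NonIncr f) (β : Ordinal) :
    Initial {t : ℝ | 0 < t ∧ β < f t} := by
  constructor
  · intro t ht; exact ht.1
  · intro t ht s hs hst
    exact ⟨hs, lt_of_lt_of_le ht.2 (hf s t hs hst)⟩

/-- Any positive value attained by a left-continuous function has a level set of
positive measure. -/
lemma pos_measure_lev {f : ℝ → Ordinal} (hf : LeftCont f) {t : ℝ} (ht : 0 < t) :
    0 < volume (lev f (f t)) := by
  obtain ⟨δ, hδ, hδ'⟩ := hf t ht
  set l := max (t - δ) 0 with hl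
  have hlt : l < t := max_lt (by linarith) ht
  have hsub : Ioc l t ⊆ lev f (f t) := by
    intro s hs
    have hs0 : 0 < s := lt_of_le_of_lt (le_max_right _ _) hs.1
    have : t - δ < s := lt_of_le_of_lt (le_max_left _ _) hs.1
    exact ⟨hs0, hδ' s this hs.2⟩
  calc (0:ℝ≥0∞) < ENNReal.ofReal (t - l) := ENNReal.ofReal_pos.mpr (by linarith)
    _ = volume (Ioc l t) := (Real.volume_Ioc ▸ rfl)
    _ ≤ volume (lev f (f t)) := measure_mono hsub

/-! ### Rearrangement preserves the measure of super-level sets -/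

lemma rearr_vol_gt {f u : ℝ → Ordinal} (hr : IsRearrangement f u)
    (hufin : (u '' Ioi 0).Finite)
    (hmu : ∀ α : Ordinal, 0 < α → MeasurableSet (lev u α)) (β : Ordinal) :
    volume {t : ℝ | 0 < t ∧ β < f t} = volume {t : ℝ | 0 < t ∧ β < u t} := by
  obtain ⟨hfNI, hfLC, hlev⟩ := hr
  set V : Finset Ordinal := hufin.toFinset.filter (fun α => β < α) with hV
  have hVpos : ∀ α ∈ V, 0 < α := fun α hα => by
    have : β < α := (Finset.mem_filter.mp hα).2
    exact lt_of_le_of_lt (zero_le) this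
  have hclaim1 : {t : ℝ | 0 < t ∧ β < f t} = ⋃ α ∈ V, lev f α := by
    apply Subset.antisymm
    · intro t ht
      have hpos : 0 < volume (lev f (f t)) := pos_measure_lev hfLC ht.1
      have hft : 0 < f t := lt_of_le_of_lt (zero_le) ht.2
      have := hlev (f t) hft
      rw [this] at hpos
      obtain ⟨s, hs⟩ := nonempty_of_measure_ne_zero (ne_of_gt hpos)
      have hmem : f t ∈ V := by
        rw [hV, Finset.mem_filter]
        exact ⟨hufin.mem_toFinset.mpr ⟨s, hs.1, hs.2⟩, ht.2⟩
      exact mem_biUnion hmem ⟨ht.1, rfl⟩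
    · intro t ht
      simp only [mem_iUnion] at ht
      obtain ⟨α, hα, htα⟩ := ht
      exact ⟨htα.1, htα.2 ▸ (Finset.mem_filter.mp hα).2⟩
  have hclaim2 : {t : ℝ | 0 < t ∧ β < u t} = ⋃ α ∈ V, lev u α := by
    apply Subset.antisymm
    · intro t ht
      have hmem : u t ∈ V := by
        rw [hV, Finset.mem_filter]
        exact ⟨hufin.mem_toFinset.mpr ⟨t, ht.1, rfl⟩, ht.2⟩
      exact mem_biUnion hmem ⟨ht.1, rfl⟩
    · intro t ht
      simp only [mem_iUnion] at ht
      obtain ⟨α, hα, htα⟩ := ht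
      exact ⟨htα.1, htα.2 ▸ (Finset.mem_filter.mp hα).2⟩
  rw [hclaim1, hclaim2]
  rw [measure_biUnion_finset ?_ (fun α hα => lev_measurable_of_nonIncr hfNI α),
      measure_biUnion_finset ?_ (fun α hα => hmu α (hVpos α hα))]
  · exact Finset.sum_congr rfl (fun α hα => hlev α (hVpos α hα))
  · intro α _ α' _ hne
    simp only [Function.onFun]
    rw [Set.disjoint_left]
    intro t ht ht'
    exact hne (ht.2 ▸ ht'.2 ▸ rfl)
  · intro α _ α' _ hne
    simp only [Function.onFun]
    rw [Set.disjoint_left]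
    intro t ht ht'
    exact hne (ht.2 ▸ ht'.2 ▸ rfl)

/-! ### The area invariant -/

noncomputable def Hm (Ω : Ordinal) (h : ℝ → Ordinal) (m : ℕ) : ℝ≥0∞ :=
  volume {t : ℝ | 0 < t ∧ Ω * m < h t}

noncomputable def Ih (Ω : Ordinal) (h : ℝ → Ordinal) : ℝ≥0∞ := ∑' m : ℕ, Hm Ω h m

lemma tsplit (q : ℕ → ℝ≥0∞) (k : ℕ) :
    ∑' m, q m = ∑ m ∈ Finset.range k, q m + ∑' j, q (j + k) :=
  (Summable.sum_add_tsum_nat_add' ENNReal.summable).symm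

lemma min_add_tsub (e a : ℝ≥0∞) : min e a + (a - e) = a := by
  rcases le_total a e with h | h
  · rw [min_eq_right h, tsub_eq_zero_of_le h, add_zero]
  · rw [min_eq_left h, add_tsub_cancel_of_le h]

/-- The key step: an ε-compression does not increase the invariant `Ih`. -/
lemma comp_Ih_le {Ω : Ordinal} (hΩ : (0:Ordinal) < Ω) (habs : ∀ a < Ω, a + Ω = Ω)
    {ε : ℝ} (hε : 0 < ε) {h h' : ℝ → Ordinal}
    (hNI : NonIncr h) (hFR : FiniteRange h) (hc : IsCompression ε h' h) :
    Ih Ω h' ≤ Ih Ω h := by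
  classical
  obtain ⟨γ', f, hγpos, hγle, hre, heq, hgt⟩ := hc
  set e : ℝ≥0∞ := ENNReal.ofReal ε with he
  have heTop : e ≠ ⊤ := ENNReal.ofReal_ne_top
  have hvolIoc : volume (Ioc (0:ℝ) ε) = e := by
    rw [Real.volume_Ioc, _root_.sub_zero]
  have hfNI : NonIncr f := hre.1
  have hfLC : LeftCont f := hre.2.1
  -- the case where `γ'` dominates every `Ω * m`
  by_cases hbig : ∃ c : ℕ, γ' < Ω * (c + 1 : ℕ)
  case neg =>
    push_neg at hbig
    have hIh : Ih Ω h = ⊤ := by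
      have hub : ∀ m : ℕ, e ≤ Hm Ω h m := by
        intro m
        have hsub : Ioc (0:ℝ) ε ⊆ {t : ℝ | 0 < t ∧ Ω * m < h t} := by
          intro t ht
          refine ⟨ht.1, lt_of_lt_of_le ?_ (le_trans hγle (hNI t ε ht.1 ht.2))⟩
          calc Ω * m < Ω * (m + 1 : ℕ) := by
                apply (mul_lt_mul_iff_right₀ hΩ).mpr
                exact_mod_cast Nat.lt_succ_self m
            _ ≤ γ' := hbig m
        calc e = volume (Ioc (0:ℝ) ε) := hvolIoc.symm
          _ ≤ _ := measure_mono hsub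
      have : (⊤ : ℝ≥0∞) = ∑' _ : ℕ, e := (ENNReal.tsum_const_eq_top_of_ne_zero
        (by simp [he, ENNReal.ofReal_eq_zero, not_le, hε])).symm
      refine top_unique ?_
      rw [this]
      exact ENNReal.tsum_le_tsum hub
    rw [hIh]; exact le_top
  case pos =>
  -- choose the least `c` with `γ' < Ω * (c+1)`
  set c := Nat.find hbig with hcdef
  have hcspec : γ' < Ω * ((c:ℕ) + 1 : ℕ) := Nat.find_spec hbig
  have hcmin : Ω * (c : ℕ) ≤ γ' := by
    rcases Nat.eq_zero_or_pos c with h0 | hpos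
    · simp [h0]
    · by_contra hlt
      push_neg at hlt
      have hmin := Nat.find_min hbig (m := c - 1) (by omega)
      apply hmin
      have hcast : ((c - 1 + 1 : ℕ) : Ordinal) = ((c : ℕ) : Ordinal) := by
        norm_cast
        omega
      rw [hcast]
      exact hlt
  set ρ' := γ' - Ω * (c:ℕ) with hρdef
  have hdm : Ω * (c:ℕ) + ρ' = γ' := Ordinal.add_sub_cancel_of_le hcmin
  have hρ : ρ' < Ω := by
    by_contra hge
    push_neg at hge
    have : Ω * ((c:ℕ) + 1 : ℕ) ≤ γ' := by
      calc Ω * ((c:ℕ) + 1 : ℕ) = Ω * (c:ℕ) + Ω := by push_cast; rw [mul_add, mul_one]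
        _ ≤ Ω * (c:ℕ) + ρ' := add_le_add_right hge _
        _ = γ' := hdm
    exact absurd hcspec (not_lt.mpr this)
  have hΩc_lt : ρ' ≠ 0 → Ω * (c:ℕ) < γ' := by
    intro hρ0
    rw [← hdm]
    have h1 : Ω * (c:ℕ) + 0 < Ω * (c:ℕ) + ρ' :=
      add_lt_add_right (pos_iff_ne_zero.mpr hρ0) _
    rwa [add_zero] at h1
  -- basic facts about `u`
  set u := subInd h γ' (Set.Ioc 0 ε) with hu
  have hu_Ioc : ∀ t ∈ Ioc (0:ℝ) ε, u t = h t - γ' := by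
    intro t ht
    simp only [hu, subInd, if_pos ht]
  have hu_Ioi : ∀ t : ℝ, ε < t → u t = h t := by
    intro t ht
    have : t ∉ Ioc (0:ℝ) ε := fun hmem => absurd hmem.2 (not_le.mpr ht)
    simp only [hu, subInd, if_neg this]
  have hufin : (u '' Ioi 0).Finite := by
    apply Set.Finite.subset (hFR.union (hFR.image (fun α => α - γ')))
    rintro _ ⟨t, ht, rfl⟩
    by_cases htε : t ∈ Ioc (0:ℝ) ε
    · exact Or.inr ⟨h t, ⟨t, ht, rfl⟩, (hu_Ioc t htε).symm⟩
    · refine Or.inl ⟨t, ht, ?_⟩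
      simp only [hu, subInd, if_neg htε]
  -- measurability of level sets of `u`
  have hpiece : ∀ (I : Set ℝ) (_ : I.OrdConnected)
      (_ : ∀ s ∈ I, ∀ t ∈ I, s ≤ t → u t ≤ u s) (α : Ordinal),
      MeasurableSet {t | t ∈ I ∧ u t = α} := by
    intro I hI hmono α
    apply Set.OrdConnected.measurableSet
    constructor
    intro x hx y hy z hz
    have hzI : z ∈ I := hI.out hx.1 hy.1 hz
    refine ⟨hzI, le_antisymm ?_ ?_⟩
    · rw [← hx.2]; exact hmono x hx.1 z hzI hz.1
    · rw [← hy.2]; exact hmono z hzI y hy.1 hz.2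
  have humono1 : ∀ s ∈ Ioc (0:ℝ) ε, ∀ t ∈ Ioc (0:ℝ) ε, s ≤ t → u t ≤ u s := by
    intro s hs t ht hst
    rw [hu_Ioc s hs, hu_Ioc t ht]
    rw [Ordinal.sub_le]
    exact le_trans (hNI s t hs.1 hst) (Ordinal.le_add_sub _ _)
  have humono2 : ∀ s ∈ Ioi ε, ∀ t ∈ Ioi ε, s ≤ t → u t ≤ u s := by
    intro s hs t ht hst
    rw [hu_Ioi s hs, hu_Ioi t ht]
    exact hNI s t (lt_trans hε hs) hst
  have hmu : ∀ α : Ordinal, 0 < α → MeasurableSet (lev u α) := by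
    intro α _
    have hsplit : lev u α = {t | t ∈ Ioc (0:ℝ) ε ∧ u t = α} ∪ {t | t ∈ Ioi ε ∧ u t = α} := by
      ext t
      constructor
      · rintro ⟨ht0, htα⟩
        rcases le_or_gt t ε with h1 | h1
        · exact Or.inl ⟨⟨ht0, h1⟩, htα⟩
        · exact Or.inr ⟨h1, htα⟩
      · rintro (⟨hI, htα⟩ | ⟨hI, htα⟩)
        · exact ⟨hI.1, htα⟩
        · exact ⟨lt_trans hε hI, htα⟩
    rw [hsplit]
    exact (hpiece _ ordConnected_Ioc humono1 α).union (hpiece _ ordConnected_Ioi humono2 α)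
  -- the rearranged super-level volumes
  set F : ℕ → ℝ≥0∞ := fun j => volume {t : ℝ | 0 < t ∧ Ω * j < f t} with hFdef
  set H : ℕ → ℝ≥0∞ := fun m => Hm Ω h m with hHdef
  set G : ℝ≥0∞ := volume ({t : ℝ | 0 < t ∧ γ' < h t} ∩ Ioc 0 ε) with hGdef
  have hrearr : ∀ j : ℕ, F j = volume {t : ℝ | 0 < t ∧ Ω * j < u t} := by
    intro j
    rw [hFdef]
    exact rearr_vol_gt hre hufin hmu _
  -- splitting super-level volumes of h'
  have hb_split : ∀ m : ℕ, Hm Ω h' m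
      = volume ({t : ℝ | 0 < t ∧ Ω * m < h' t} ∩ Ioc 0 ε) + (F m - e) := by
    intro m
    have h1 := vol_split (S := {t : ℝ | 0 < t ∧ Ω * m < h' t}) (fun t ht => ht.1) ε
    have hset : {t : ℝ | 0 < t ∧ Ω * m < h' t} ∩ Ioi ε
        = {t : ℝ | 0 < t ∧ Ω * m < f t} ∩ Ioi ε := by
      ext t
      simp only [mem_inter_iff, mem_setOf_eq, mem_Ioi]
      constructor
      · rintro ⟨⟨ht1, ht2⟩, ht3⟩
        rw [hgt t ht3] at ht2
        exact ⟨⟨ht1, ht2⟩, ht3⟩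
      · rintro ⟨⟨ht1, ht2⟩, ht3⟩
        rw [← hgt t ht3] at ht2
        exact ⟨⟨ht1, ht2⟩, ht3⟩
    rw [hset, initial_vol_Ioi (initial_gt hfNI _) hε] at h1
    rw [Hm] at * <;> try skip
    exact h1
  -- splitting super-level volumes of h
  have ha_split : ∀ m : ℕ, Hm Ω h m = min e (H m) + (H m - e) := by
    intro m
    have h1 := vol_split (S := {t : ℝ | 0 < t ∧ Ω * m < h t}) (fun t ht => ht.1) ε
    rw [initial_vol_Ioi (initial_gt hNI _) hε, initial_vol_Ioc (initial_gt hNI _) hε] at h1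
    rw [Hm]
    exact h1
  -- splitting super-level volumes of u
  have hu_split : ∀ j : ℕ, volume {t : ℝ | 0 < t ∧ Ω * j < u t}
      = volume ({t : ℝ | 0 < t ∧ Ω * j < u t} ∩ Ioc 0 ε) + (H j - e) := by
    intro j
    have h1 := vol_split (S := {t : ℝ | 0 < t ∧ Ω * j < u t}) (fun t ht => ht.1) ε
    have hset : {t : ℝ | 0 < t ∧ Ω * j < u t} ∩ Ioi ε
        = {t : ℝ | 0 < t ∧ Ω * j < h t} ∩ Ioi ε := by
      ext t
      simp only [mem_inter_iff, mem_setOf_eq, mem_Ioi]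
      constructor
      · rintro ⟨⟨ht1, ht2⟩, ht3⟩
        rw [hu_Ioi t ht3] at ht2
        exact ⟨⟨ht1, ht2⟩, ht3⟩
      · rintro ⟨⟨ht1, ht2⟩, ht3⟩
        rw [← hu_Ioi t ht3] at ht2
        exact ⟨⟨ht1, ht2⟩, ht3⟩
    rw [hset, initial_vol_Ioi (initial_gt hNI _) hε] at h1
    exact h1
  -- set identities on (0, ε]
  have key_lt : ∀ m : ℕ, m < c → {t : ℝ | 0 < t ∧ Ω * m < h' t} ∩ Ioc 0 ε = Ioc 0 ε := by
    intro m hm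
    apply inter_eq_self_of_subset_right
    intro t ht
    refine ⟨ht.1, ?_⟩
    rw [heq t ht.1 ht.2]
    have h2 : γ' ≤ γ' + f t := by
      have := add_le_add_right (zero_le (a := f t)) γ'
      rwa [add_zero] at this
    calc Ω * m < Ω * (c:ℕ) + ρ' := mul_lt_gamma hΩ hm
      _ = γ' := hdm
      _ ≤ γ' + f t := h2
  have key_c : {t : ℝ | 0 < t ∧ Ω * c < h' t} ∩ Ioc 0 ε
      = if ρ' = 0 then {t : ℝ | 0 < t ∧ (0:Ordinal) < f t} ∩ Ioc 0 ε else Ioc 0 ε := by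
    by_cases hρ0 : ρ' = 0
    · rw [if_pos hρ0]
      have hγc : γ' = Ω * (c:ℕ) := by rw [← hdm, hρ0, add_zero]
      ext t
      simp only [mem_inter_iff, mem_setOf_eq, mem_Ioc]
      constructor
      · rintro ⟨⟨ht1, ht2⟩, ht3⟩
        rw [heq t ht1 ht3.2, ← hγc] at ht2
        have : (0:Ordinal) < f t := by
          by_contra hf0
          push_neg at hf0
          have : f t = 0 := nonpos_iff_eq_zero.mp hf0
          rw [this, add_zero] at ht2
          exact lt_irrefl _ (hγc ▸ ht2)
        exact ⟨⟨ht1, this⟩, ht3⟩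
      · rintro ⟨⟨ht1, ht2⟩, ht3⟩
        refine ⟨⟨ht1, ?_⟩, ht3⟩
        rw [heq t ht1 ht3.2, ← hγc]
        calc γ' = γ' + 0 := (add_zero _).symm
          _ < γ' + f t := add_lt_add_right ht2 _
    · rw [if_neg hρ0]
      apply inter_eq_self_of_subset_right
      intro t ht
      refine ⟨ht.1, ?_⟩
      rw [heq t ht.1 ht.2]
      have h2 : γ' ≤ γ' + f t := by
        have := add_le_add_right (zero_le (a := f t)) γ'
        rwa [add_zero] at this
      exact lt_of_lt_of_le (hΩc_lt hρ0) h2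
  have key_gt : ∀ j : ℕ, {t : ℝ | 0 < t ∧ Ω * (j + (c+1) : ℕ) < h' t} ∩ Ioc 0 ε
      = {t : ℝ | 0 < t ∧ Ω * (j + 1 : ℕ) < f t} ∩ Ioc 0 ε := by
    intro j
    have hkey : γ' + Ω * (j + 1 : ℕ) = Ω * (j + (c+1) : ℕ) := by
      rw [← hdm, gamma_add_mul hΩ habs hρ (Nat.succ_pos j)]
      congr 1
      norm_cast
      omega
    ext t
    simp only [mem_inter_iff, mem_setOf_eq]
    constructor
    · rintro ⟨⟨ht1, ht2⟩, ht3⟩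
      rw [heq t ht1 ht3.2, ← hkey, add_lt_add_iff_left] at ht2
      exact ⟨⟨ht1, ht2⟩, ht3⟩
    · rintro ⟨⟨ht1, ht2⟩, ht3⟩
      refine ⟨⟨ht1, ?_⟩, ht3⟩
      rw [heq t ht1 ht3.2, ← hkey, add_lt_add_iff_left]
      exact ht2
  have hu_gt : ∀ j : ℕ, 0 < j → {t : ℝ | 0 < t ∧ Ω * j < u t} ∩ Ioc 0 ε
      = {t : ℝ | 0 < t ∧ Ω * ((c:ℕ) + j : ℕ) < h t} ∩ Ioc 0 ε := by
    intro j hj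
    have hkey : γ' + Ω * j = Ω * ((c:ℕ) + j : ℕ) := by
      rw [← hdm, gamma_add_mul hΩ habs hρ hj]
    ext t
    simp only [mem_inter_iff, mem_setOf_eq]
    constructor
    · rintro ⟨⟨ht1, ht2⟩, ht3⟩
      rw [hu_Ioc t ht3, Ordinal.lt_sub, hkey] at ht2
      exact ⟨⟨ht1, ht2⟩, ht3⟩
    · rintro ⟨⟨ht1, ht2⟩, ht3⟩
      refine ⟨⟨ht1, ?_⟩, ht3⟩
      rw [hu_Ioc t ht3, Ordinal.lt_sub, hkey]
      exact ht2
  have hu_zero : {t : ℝ | 0 < t ∧ Ω * (0:ℕ) < u t} ∩ Ioc 0 ε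
      = {t : ℝ | 0 < t ∧ γ' < h t} ∩ Ioc 0 ε := by
    ext t
    simp only [mem_inter_iff, mem_setOf_eq, Nat.cast_zero, mul_zero]
    constructor
    · rintro ⟨⟨ht1, ht2⟩, ht3⟩
      rw [hu_Ioc t ht3, Ordinal.lt_sub, add_zero] at ht2
      exact ⟨⟨ht1, ht2⟩, ht3⟩
    · rintro ⟨⟨ht1, ht2⟩, ht3⟩
      refine ⟨⟨ht1, ?_⟩, ht3⟩
      rw [hu_Ioc t ht3, Ordinal.lt_sub, add_zero]
      exact ht2
  -- formulas for F
  have hF_pos : ∀ j : ℕ, F (j+1) = min e (H ((c:ℕ) + (j+1))) + (H (j+1) - e) := by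
    intro j
    rw [hrearr (j+1), hu_split (j+1), hu_gt (j+1) (Nat.succ_pos j),
      initial_vol_Ioc (initial_gt hNI _) hε]
    rfl
  have hF0 : F 0 = G + (H 0 - e) := by
    rw [hrearr 0, hu_split 0, hu_zero]
  -- lower bounds for H on small indices
  have hHm_ge : ∀ m : ℕ, Ω * m < γ' → e ≤ H m := by
    intro m hm
    have hsub : Ioc (0:ℝ) ε ⊆ {t : ℝ | 0 < t ∧ Ω * m < h t} := by
      intro t ht
      exact ⟨ht.1, lt_of_lt_of_le hm (le_trans hγle (hNI t ε ht.1 ht.2))⟩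
    calc e = volume (Ioc (0:ℝ) ε) := hvolIoc.symm
      _ ≤ _ := measure_mono hsub
  have hGe : G ≤ e := by
    rw [hGdef, ← hvolIoc]
    exact measure_mono inter_subset_right
  -- the value at index c
  set X : ℝ≥0∞ := if ρ' = 0 then min e (F 0) else e with hXdef
  have hb_lt : ∀ m : ℕ, m < c → Hm Ω h' m = e + (F m - e) := by
    intro m hm
    rw [hb_split m, key_lt m hm, hvolIoc]
  have hb_c : Hm Ω h' c = X + (F c - e) := by
    rw [hb_split c, key_c, hXdef]
    by_cases hρ0 : ρ' = 0
    · rw [if_pos hρ0, if_pos hρ0, initial_vol_Ioc (initial_gt hfNI 0) hε]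
      congr 2
      rw [hFdef]
      simp
    · rw [if_neg hρ0, if_neg hρ0, hvolIoc]
  have hb_gt : ∀ j : ℕ, Hm Ω h' (j + (c+1)) = min e (F (j+1)) + (F (j+(c+1)) - e) := by
    intro j
    rw [hb_split _, key_gt j, initial_vol_Ioc (initial_gt hfNI _) hε]
  -- tsum splittings
  have hT : ∀ q : ℕ → ℝ≥0∞, ∑' m, q m
      = ∑ m ∈ Finset.range c, q m + (q c + ∑' j, q (j + (c+1))) := by
    intro q
    rw [tsplit q (c+1), Finset.sum_range_succ, add_assoc]
  have hzero : ∀ q : ℕ → ℝ≥0∞, ∑' m, q m = q 0 + ∑' j, q (j + 1) := by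
    intro q
    rw [tsplit q 1, Finset.sum_range_one]
  -- the two closed forms
  have hA : Ih Ω h' = ((c:ℕ) : ℝ≥0∞) * e + (X + ((F 0 - e) + ∑' j, F (j+1))) := by
    have e1 : ∑ m ∈ Finset.range c, Hm Ω h' m = ∑ m ∈ Finset.range c, (e + (F m - e)) :=
      Finset.sum_congr rfl (fun m hm => hb_lt m (Finset.mem_range.mp hm))
    have e2 : ∑' j, Hm Ω h' (j + (c+1)) = ∑' j, (min e (F (j+1)) + (F (j+(c+1)) - e)) :=
      tsum_congr hb_gt
    have e3 : ∑ m ∈ Finset.range c, (e + (F m - e))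
        = ((c:ℕ) : ℝ≥0∞) * e + ∑ m ∈ Finset.range c, (F m - e) := by
      rw [Finset.sum_add_distrib, Finset.sum_const, Finset.card_range, _root_.nsmul_eq_mul]
    have e4 : ∑' j, (min e (F (j+1)) + (F (j+(c+1)) - e))
        = ∑' j, min e (F (j+1)) + ∑' j, (F (j+(c+1)) - e) := ENNReal.tsum_add
    have e5 : ∑ m ∈ Finset.range c, (F m - e) + ((F c - e) + ∑' j, (F (j+(c+1)) - e))
        = (F 0 - e) + ∑' j, (F (j+1) - e) := by
      rw [← hT (fun m => F m - e)]
      exact hzero (fun m => F m - e)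
    have e6 : ∑' j, min e (F (j+1)) + ∑' j, (F (j+1) - e) = ∑' j, F (j+1) := by
      rw [← ENNReal.tsum_add]
      exact tsum_congr (fun j => min_add_tsub e (F (j+1)))
    calc Ih Ω h' = ∑ m ∈ Finset.range c, Hm Ω h' m + (Hm Ω h' c + ∑' j, Hm Ω h' (j + (c+1))) :=
          hT (Hm Ω h')
      _ = (((c:ℕ) : ℝ≥0∞) * e + ∑ m ∈ Finset.range c, (F m - e))
          + ((X + (F c - e)) + (∑' j, min e (F (j+1)) + ∑' j, (F (j+(c+1)) - e))) := by
          rw [e1, e3, hb_c, e2, e4]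
      _ = ((c:ℕ) : ℝ≥0∞) * e + (X + (∑' j, min e (F (j+1))
          + (∑ m ∈ Finset.range c, (F m - e) + ((F c - e) + ∑' j, (F (j+(c+1)) - e))))) := by
          generalize (∑ m ∈ Finset.range c, (F m - e)) = A
          generalize (F c - e) = B
          generalize (∑' j, (F (j+(c+1)) - e)) = C
          generalize (∑' j, min e (F (j+1))) = D
          ring
      _ = ((c:ℕ) : ℝ≥0∞) * e + (X + (∑' j, min e (F (j+1))
          + ((F 0 - e) + ∑' j, (F (j+1) - e)))) := by rw [e5]
      _ = ((c:ℕ) : ℝ≥0∞) * e + (X + ((F 0 - e)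
          + (∑' j, min e (F (j+1)) + ∑' j, (F (j+1) - e)))) := by
          generalize (F 0 - e) = P
          generalize (∑' j, (F (j+1) - e)) = E
          generalize (∑' j, min e (F (j+1))) = D
          ring
      _ = ((c:ℕ) : ℝ≥0∞) * e + (X + ((F 0 - e) + ∑' j, F (j+1))) := by rw [e6]
  have hB : Ih Ω h = ((c:ℕ) : ℝ≥0∞) * e + (min e (H c) + ((H 0 - e) + ∑' j, F (j+1))) := by
    have f2 : ∑' m, Hm Ω h m = ∑' m, min e (H m) + ∑' m, (H m - e) := by
      rw [← ENNReal.tsum_add]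
      exact tsum_congr ha_split
    have f3 : ∑' m, min e (H m)
        = ∑ m ∈ Finset.range c, min e (H m) + (min e (H c) + ∑' j, min e (H (j + (c+1)))) :=
      hT _
    have f4 : ∑ m ∈ Finset.range c, min e (H m) = ((c:ℕ) : ℝ≥0∞) * e := by
      have : ∀ m ∈ Finset.range c, min e (H m) = e := by
        intro m hm
        apply min_eq_left
        apply hHm_ge
        calc Ω * m < Ω * (c:ℕ) + ρ' := mul_lt_gamma hΩ (Finset.mem_range.mp hm)
          _ = γ' := hdm
      rw [Finset.sum_congr rfl this, Finset.sum_const, Finset.card_range, _root_.nsmul_eq_mul]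
    have f5 : ∑' m, (H m - e) = (H 0 - e) + ∑' j, (H (j+1) - e) := hzero _
    have f6 : ∑' j, min e (H (j + (c+1))) + ∑' j, (H (j+1) - e) = ∑' j, F (j+1) := by
      rw [← ENNReal.tsum_add]
      refine tsum_congr (fun j => ?_)
      rw [hF_pos j, show (c:ℕ) + (j+1) = j + (c+1) from by omega]
    calc Ih Ω h = ∑' m, Hm Ω h m := rfl
      _ = ∑' m, min e (H m) + ∑' m, (H m - e) := f2
      _ = (∑ m ∈ Finset.range c, min e (H m) + (min e (H c) + ∑' j, min e (H (j + (c+1)))))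
          + ((H 0 - e) + ∑' j, (H (j+1) - e)) := by rw [f3, f5]
      _ = ((c:ℕ) : ℝ≥0∞) * e + (min e (H c) + ∑' j, min e (H (j + (c+1))))
          + ((H 0 - e) + ∑' j, (H (j+1) - e)) := by rw [f4]
      _ = ((c:ℕ) : ℝ≥0∞) * e + (min e (H c) + ((H 0 - e)
          + (∑' j, min e (H (j + (c+1))) + ∑' j, (H (j+1) - e)))) := by
          generalize (H 0 - e) = Q
          generalize (∑' j, (H (j+1) - e)) = T2
          generalize (∑' j, min e (H (j + (c+1)))) = S
          generalize (min e (H c)) = M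
          ring
      _ = ((c:ℕ) : ℝ≥0∞) * e + (min e (H c) + ((H 0 - e) + ∑' j, F (j+1))) := by rw [f6]
  -- the core inequality
  have hcore : X + (F 0 - e) ≤ min e (H c) + (H 0 - e) := by
    by_cases hρ0 : ρ' = 0
    · have hγc : γ' = Ω * (c:ℕ) := by rw [← hdm, hρ0, add_zero]
      have hGc : G = min e (H c) := by
        rw [hGdef, hγc]
        rw [initial_vol_Ioc (initial_gt hNI _) hε]
        rfl
      apply le_of_eq
      calc X + (F 0 - e) = min e (F 0) + (F 0 - e) := by rw [hXdef, if_pos hρ0]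
        _ = F 0 := min_add_tsub e (F 0)
        _ = G + (H 0 - e) := hF0
        _ = min e (H c) + (H 0 - e) := by rw [hGc]
    · have hX : X = e := by rw [hXdef, if_neg hρ0]
      have hHc : min e (H c) = e := min_eq_left (hHm_ge c (hΩc_lt hρ0))
      rw [hX, hHc]
      apply add_le_add_right
      rw [hF0]
      calc G + (H 0 - e) - e ≤ e + (H 0 - e) - e :=
            tsub_le_tsub_right (add_le_add_left hGe _) e
        _ = H 0 - e := by rw [ENNReal.add_sub_cancel_left heTop]
  rw [hA, hB]
  apply add_le_add_right
  calc X + ((F 0 - e) + ∑' j, F (j+1)) = (X + (F 0 - e)) + ∑' j, F (j+1) := by rw [add_assoc]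
    _ ≤ (min e (H c) + (H 0 - e)) + ∑' j, F (j+1) := add_le_add_left hcore _
    _ = min e (H c) + ((H 0 - e) + ∑' j, F (j+1)) := by rw [add_assoc]


/-- Base bound: `Ih` of a function dominated by `Ω * k` and supported in `(0,1]`. -/
lemma Ih_le_base {Ω : Ordinal} {k : ℕ} {h : ℝ → Ordinal}
    (hbd : ∀ t : ℝ, 0 < t → h t ≤ Ω * k) (hvan : ∀ t : ℝ, (1:ℝ) < t → h t = 0) :
    Ih Ω h ≤ (k : ℝ≥0∞) := by
  have hle : ∀ m : ℕ, Hm Ω h m ≤ (if m < k then 1 else 0 : ℝ≥0∞) := by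
    intro m
    by_cases hm : m < k
    · rw [if_pos hm]
      have hsub : {t : ℝ | 0 < t ∧ Ω * m < h t} ⊆ Ioc (0:ℝ) 1 := by
        intro t ht
        refine ⟨ht.1, ?_⟩
        by_contra hgt
        push_neg at hgt
        have h0 := hvan t hgt
        have h2 : Ω * m < h t := ht.2
        rw [h0] at h2
        exact absurd h2 not_lt_zero
      calc Hm Ω h m ≤ volume (Ioc (0:ℝ) 1) := measure_mono hsub
        _ = 1 := by rw [Real.volume_Ioc]; norm_num
    · rw [if_neg hm]
      push_neg at hm
      have hempty : {t : ℝ | 0 < t ∧ Ω * m < h t} = ∅ := by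
        ext t
        simp only [mem_setOf_eq, mem_empty_iff_false, iff_false, not_and, not_lt]
        intro ht
        refine le_trans (hbd t ht) (mul_le_mul_right ?_ Ω)
        exact_mod_cast Nat.cast_le.mpr hm
      rw [Hm, hempty, measure_empty]
  calc Ih Ω h ≤ ∑' m : ℕ, (if m < k then 1 else 0 : ℝ≥0∞) := ENNReal.tsum_le_tsum hle
    _ = ∑ m ∈ Finset.range k, (if m < k then 1 else 0 : ℝ≥0∞) := by
        apply tsum_eq_sum
        intro m hm
        rw [if_neg (by simpa using hm)]
    _ = ∑ _m ∈ Finset.range k, (1:ℝ≥0∞) :=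
        Finset.sum_congr rfl (fun m hm => if_pos (Finset.mem_range.mp hm))
    _ = (k : ℝ≥0∞) := by simp

/-- Extraction: if `Ih Ω h ≤ k` then `h ε ≤ Ω * ⌊k/ε⌋`. -/
lemma ext_bound {Ω : Ordinal} (hΩ : (0:Ordinal) < Ω) {h : ℝ → Ordinal} {ε : ℝ} (hε : 0 < ε)
    (hNI : NonIncr h) {k : ℕ} (hIh : Ih Ω h ≤ (k : ℝ≥0∞)) :
    h ε ≤ Ω * (⌊(k : ℝ) / ε⌋₊ : ℕ) := by
  set N := ⌊(k:ℝ)/ε⌋₊ with hN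
  by_contra hlt
  push_neg at hlt
  have hterm : ∀ m : ℕ, m ≤ N → ENNReal.ofReal ε ≤ Hm Ω h m := by
    intro m hm
    have hsub : Ioc (0:ℝ) ε ⊆ {t : ℝ | 0 < t ∧ Ω * m < h t} := by
      intro t ht
      refine ⟨ht.1, lt_of_le_of_lt (mul_le_mul_right ?_ Ω)
        (lt_of_lt_of_le hlt (hNI t ε ht.1 ht.2))⟩
      exact_mod_cast Nat.cast_le.mpr hm
    calc ENNReal.ofReal ε = volume (Ioc (0:ℝ) ε) := by rw [Real.volume_Ioc, _root_.sub_zero]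
      _ ≤ _ := measure_mono hsub
  have hsum : ((N+1 : ℕ) : ℝ≥0∞) * ENNReal.ofReal ε ≤ Ih Ω h := by
    calc ((N+1:ℕ) : ℝ≥0∞) * ENNReal.ofReal ε
        = ∑ _m ∈ Finset.range (N+1), ENNReal.ofReal ε := by
          rw [Finset.sum_const, Finset.card_range, _root_.nsmul_eq_mul]
      _ ≤ ∑ m ∈ Finset.range (N+1), Hm Ω h m :=
          Finset.sum_le_sum (fun m hm => hterm m (by
            have := Finset.mem_range.mp hm
            omega))
      _ ≤ Ih Ω h := ENNReal.sum_le_tsum _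
  have hkey : ENNReal.ofReal (((N+1:ℕ):ℝ) * ε) ≤ ENNReal.ofReal (k:ℝ) := by
    rw [ENNReal.ofReal_mul (by positivity), ENNReal.ofReal_natCast, ENNReal.ofReal_natCast]
    exact le_trans hsum hIh
  have hreal : ((N+1:ℕ):ℝ) * ε ≤ (k:ℝ) :=
    (ENNReal.ofReal_le_ofReal_iff (by positivity)).mp hkey
  have hdiv : ((N+1:ℕ):ℝ) ≤ (k:ℝ)/ε := by
    rw [le_div_iff₀ hε]
    exact hreal
  have : N + 1 ≤ N := hN ▸ Nat.le_floor hdiv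
  omega



end Stmt10

open Stmt10

/-- upper bound for the ε-area of a function bounded by `ω^γ·k`. -/
theorem stmt_10 (γ : Ordinal) (hγ : γ < ω₁) (k : ℕ) (hk : 0 < k) (ε : ℝ) (hε : 0 < ε)
    (g : ℝ → Ordinal) (hNI : NonIncr g) (hLC : LeftCont g)
    (hbd : ∀ t : ℝ, 0 < t → g t ≤ (ω : Ordinal) ^ γ * (k : Ordinal))
    (hvan : ∀ t : ℝ, (1 : ℝ) < t → g t = 0) :
    Carea ε g ≤ (ω : Ordinal) ^ γ * ((⌊(k : ℝ) / ε⌋₊ : ℕ) : Ordinal) := by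
  apply csSup_le'
  rintro α ⟨n, f, hreg, hle0, hcomp, rfl⟩
  have hΩ : (0:Ordinal) < (ω : Ordinal) ^ γ := opow_pos _ omega0_pos
  have habs : ∀ a < (ω:Ordinal)^γ, a + (ω:Ordinal)^γ = (ω:Ordinal)^γ :=
    fun a ha => Ordinal.add_omega0_opow ha
  have hIh : ∀ i ≤ n, Ih ((ω:Ordinal)^γ) (f i) ≤ (k : ℝ≥0∞) := by
    intro i
    induction i with
    | zero =>
      intro _
      apply Ih_le_base (fun t ht => le_trans (hle0 t ht) (hbd t ht))
      intro t ht
      have hz := hle0 t (lt_trans one_pos ht)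
      rw [hvan t ht] at hz
      exact nonpos_iff_eq_zero.mp hz
    | succ i ih =>
      intro hin
      have hi : i ≤ n := le_of_lt (Nat.lt_of_succ_le hin)
      have hstep := comp_Ih_le hΩ habs hε (hreg i hi).1 (hreg i hi).2.2.1
        (hcomp i (Nat.lt_of_succ_le hin))
      exact le_trans hstep (ih hi)
  exact ext_bound hΩ hε (hreg n le_rfl).1 (hIh n le_rfl)
end

section
/- Let K be a compact Hausdorff space, (μ_n) a sequence of regular Borel probability measures on K converging in the weak* topology (as functionals on C(K)), and (f_n) a sequence in C(K) with 0 ≤ f_n ≤ 1 converging weakly to 0, such that ∫ f_n dμ_n ≥ ε for all n. Then for every ε' with 0 < ε' < ε there exist an infinite subset M ⊆ ℕ and pairwise disjoint Borel sets (A_n)_{n∈M} of K such that ∫_{A_n} f_n dμ_n > ε' for every n ∈ M. -/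
open MeasureTheory Set Ordinal Filter

/-- extraction of disjoint sets carrying mass from a weakly null sequence
tested against a weak*-convergent sequence of probability measures. -/
theorem stmt_11 {K : Type*} [TopologicalSpace K] [CompactSpace K] [T2Space K]
    [MeasurableSpace K] [BorelSpace K]
    (μs : ℕ → Measure K) (hprob : ∀ n, IsProbabilityMeasure (μs n))
    (hreg : ∀ n, (μs n).Regular)
    (hconv : ∃ φ : C(K, ℝ) →L[ℝ] ℝ, ∀ f : C(K, ℝ),
      Filter.Tendsto (fun n => ∫ x, f x ∂(μs n)) Filter.atTop (nhds (φ f)))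
    (f : ℕ → C(K, ℝ)) (hf0 : ∀ n x, 0 ≤ f n x) (hf1 : ∀ n x, f n x ≤ 1)
    (hweak : ∀ φ : C(K, ℝ) →L[ℝ] ℝ,
      Filter.Tendsto (fun n => φ (f n)) Filter.atTop (nhds (0:ℝ)))
    (ε ε' : ℝ) (hε' : 0 < ε') (hlt : ε' < ε)
    (hint : ∀ n, ε ≤ ∫ x, f n x ∂(μs n)) :
    ∃ M : Set ℕ, M.Infinite ∧ ∃ A : ℕ → Set K,
      (∀ n ∈ M, MeasurableSet (A n)) ∧
      (∀ n ∈ M, ∀ m ∈ M, n ≠ m → Disjoint (A n) (A m)) ∧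
      ∀ n ∈ M, ε' < ∫ x in A n, f n x ∂(μs n) := by
  classical
  obtain ⟨φ, hφ⟩ := hconv
  set δ : ℝ := (ε - ε') / 2 with hδdef
  have hδ : 0 < δ := by simp [hδdef]; linarith
  set c : ℝ := δ ^ 2 / 4 with hcdef
  have hc : 0 < c := by positivity
  -- integrability of continuous functions
  have hInt : ∀ (g : C(K, ℝ)) (N : ℕ), Integrable (fun x => g x) (μs N) := fun g N =>
    g.continuous.integrable_of_hasCompactSupport (HasCompactSupport.of_compactSpace _)
  -- key step existence
  have key : ∀ (k m : ℕ) (H : C(K, ℝ)), φ H < δ / 2 →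
      ∃ N, m < N ∧ φ (f N) < c / 2 ^ (k + 1) ∧ ∫ x, H x ∂(μs N) < δ := by
    intro k m H hH
    have h1 : ∀ᶠ N in atTop, φ (f N) < c / 2 ^ (k + 1) :=
      (hweak φ).eventually_lt_const (by positivity)
    have h2 : ∀ᶠ N in atTop, ∫ x, H x ∂(μs N) < δ :=
      (hφ H).eventually_lt_const (by linarith)
    have h3 : ∀ᶠ N in atTop, m < N := eventually_gt_atTop m
    obtain ⟨N, hN3, hN1, hN2⟩ := (h3.and (h1.and h2)).exists
    exact ⟨N, hN3, hN1, hN2⟩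
  choose! next hnext using key
  -- construct the sequence
  obtain ⟨n, H, hn0, hH0, hnS, hHS⟩ :
      ∃ (n : ℕ → ℕ) (H : ℕ → C(K, ℝ)), n 0 = next 0 0 0 ∧ H 0 = 0 ∧
        (∀ k, n (k + 1) = next (k + 1) (n k) (H k + (2 / δ) • f (n k))) ∧
        (∀ k, H (k + 1) = H k + (2 / δ) • f (n k)) := by
    refine ⟨fun k => (Nat.rec (motive := fun _ => ℕ × C(K, ℝ)) ((next 0 0 0 : ℕ), (0 : C(K, ℝ)))
      (fun k p => (next (k + 1) p.1 (p.2 + (2 / δ) • f p.1), p.2 + (2 / δ) • f p.1)) k).1,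
      fun k => (Nat.rec (motive := fun _ => ℕ × C(K, ℝ)) ((next 0 0 0 : ℕ), (0 : C(K, ℝ)))
      (fun k p => (next (k + 1) p.1 (p.2 + (2 / δ) • f p.1), p.2 + (2 / δ) • f p.1)) k).2,
      rfl, rfl, fun k => rfl, fun k => rfl⟩
  -- budget estimate
  have hΦ : ∀ k, φ (H k) ≤ δ / 2 * (1 - (1 / 2 : ℝ) ^ k) := by
    intro k
    induction k with
    | zero => simp [hH0]
    | succ k ih =>
      have hguard : φ (H k) < δ / 2 := by
        have : (0:ℝ) < (1 / 2 : ℝ) ^ k := by positivity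
        nlinarith
      have hspec : φ (f (n k)) < c / 2 ^ (k + 1) := by
        cases k with
        | zero =>
          have := hnext 0 0 0 (by simpa [hH0] using hguard)
          rw [hn0]; simpa [hH0] using this.2.1
        | succ j =>
          have hg : φ (H j + (2 / δ) • f (n j)) < δ / 2 := by
            rw [← hHS j]; exact hguard
          have := hnext (j + 1) (n j) (H j + (2 / δ) • f (n j)) hg
          rw [hnS j]; exact this.2.1
      have : φ (H (k + 1)) = φ (H k) + (2 / δ) * φ (f (n k)) := by
        rw [hHS k, map_add, φ.map_smul, _root_.smul_eq_mul]
      rw [this]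
      have h2 : (2 / δ) * φ (f (n k)) < (2 / δ) * (c / 2 ^ (k + 1)) := by
        apply mul_lt_mul_of_pos_left hspec (by positivity)
      have he : (2 / δ) * (c / 2 ^ (k + 1)) = δ / 2 * (1 / 2 : ℝ) ^ (k + 1) := by
        rw [hcdef, one_div_pow]; field_simp; ring
      have hp : ((1:ℝ)/2) ^ (k+1) = (1/2:ℝ) * (1/2:ℝ)^k := by ring
      nlinarith [pow_pos (by norm_num : (0:ℝ) < 1/2) k]
  have hguard : ∀ k, φ (H k) < δ / 2 := by
    intro k
    have h1 := hΦ k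
    have : (0:ℝ) < (1 / 2 : ℝ) ^ k := by positivity
    nlinarith
  -- specs of chosen indices
  have hmono : StrictMono n := by
    apply strictMono_nat_of_lt_succ
    intro k
    have hg : φ (H (k + 1)) < δ / 2 := hguard (k + 1)
    rw [hHS k] at hg
    have := hnext (k + 1) (n k) (H k + (2 / δ) • f (n k)) hg
    rw [hnS k]; exact this.1
  have hintH : ∀ k, ∫ x, H k x ∂(μs (n k)) < δ := by
    intro k
    cases k with
    | zero =>
      have hg : φ (H 0) < δ / 2 := hguard 0
      rw [hH0] at hg
      have := hnext 0 0 0 hg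
      rw [hn0, hH0]; exact this.2.2
    | succ j =>
      have hg : φ (H (j + 1)) < δ / 2 := hguard (j + 1)
      rw [hHS j] at hg
      have := hnext (j + 1) (n j) (H j + (2 / δ) • f (n j)) hg
      rw [hnS j, hHS j]; exact this.2.2
  -- pointwise properties of H
  have hHnn : ∀ k x, 0 ≤ H k x := by
    intro k
    induction k with
    | zero => intro x; simp [hH0]
    | succ k ih =>
      intro x
      have : H (k + 1) x = H k x + (2 / δ) * f (n k) x := by
        rw [hHS k]; simp
      rw [this]
      have := hf0 (n k) x
      have h2 : 0 ≤ 2 / δ := by positivity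
      nlinarith [ih x]
  have hHdom : ∀ k i, i < k → ∀ x, (2 / δ) * f (n i) x ≤ H k x := by
    intro k
    induction k with
    | zero => intro i hi; omega
    | succ k ih =>
      intro i hi x
      have hval : H (k + 1) x = H k x + (2 / δ) * f (n k) x := by
        rw [hHS k]; simp
      rcases Nat.lt_succ_iff_lt_or_eq.mp hi with h | h
      · have := ih i h x
        have h0 : 0 ≤ (2 / δ) * f (n k) x := by
          have := hf0 (n k) x; positivity
        rw [hval]; linarith
      · subst h
        rw [hval]
        have := hHnn i x
        linarith
  -- define the sets
  refine ⟨Set.range n, Set.infinite_range_of_injective hmono.injective,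
    fun m => {x | δ ≤ f m x} \ {x | ∃ j, n j < m ∧ δ / 2 < f (n j) x}, ?_, ?_, ?_⟩
  · -- measurability
    rintro m -
    apply MeasurableSet.diff
    · exact (isClosed_le continuous_const (f m).continuous).measurableSet
    · have : {x | ∃ j, n j < m ∧ δ / 2 < f (n j) x} =
          ⋃ j ∈ {j : ℕ | n j < m}, {x | δ / 2 < f (n j) x} := by
        ext x; simp [Set.mem_setOf_eq]
      rw [this]
      exact MeasurableSet.biUnion (Set.to_countable _) fun j _ =>
        (isOpen_lt continuous_const (f (n j)).continuous).measurableSet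
  · -- disjointness
    rintro - ⟨k, rfl⟩ - ⟨k', rfl⟩ hne
    have hkk' : k ≠ k' := fun h => hne (by rw [h])
    rw [Set.disjoint_left]
    rintro x ⟨hx1, hx2⟩ ⟨hy1, hy2⟩
    simp only [Set.mem_setOf_eq, not_exists, not_and, not_lt] at hx1 hx2 hy1 hy2
    rcases hkk'.lt_or_gt with h | h
    · have := hy2 k (hmono h); linarith
    · have := hx2 k' (hmono h); linarith
  · -- integral bound
    rintro - ⟨k, rfl⟩
    show ε' < ∫ x in {x | δ ≤ f (n k) x} \ {x | ∃ j, n j < n k ∧ δ / 2 < f (n j) x},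
      f (n k) x ∂(μs (n k))
    set m := n k with hm
    set μ := μs (n k) with hμ
    haveI : IsProbabilityMeasure μ := hprob (n k)
    set g := f (n k) with hg
    set S : Set K := {x | δ ≤ g x} with hS
    set U : Set K := {x | ∃ j, n j < m ∧ δ / 2 < f (n j) x} with hU
    have hSmeas : MeasurableSet S :=
      (isClosed_le continuous_const g.continuous).measurableSet
    have hUmeas : MeasurableSet U := by
      have : U = ⋃ j ∈ {j : ℕ | n j < m}, {x | δ / 2 < f (n j) x} := by
        ext x; simp [hU, Set.mem_setOf_eq]
      rw [this]
      exact MeasurableSet.biUnion (Set.to_countable _) fun j _ =>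
        (isOpen_lt continuous_const (f (n j)).continuous).measurableSet
    set T : Set K := S ∩ U with hT
    have hTmeas : MeasurableSet T := hSmeas.inter hUmeas
    have hintg : Integrable (fun x => g x) μ := hInt g _
    -- lower bound on ∫_S g
    have hSc : ∫ x in Sᶜ, g x ∂μ ≤ δ := by
      have h1 : ∫ x in Sᶜ, g x ∂μ ≤ ∫ x in Sᶜ, δ ∂μ := by
        apply setIntegral_mono_on hintg.integrableOn (integrableOn_const
          (measure_lt_top μ _).ne) hSmeas.compl
        intro x hx
        simp only [hS, Set.mem_compl_iff, Set.mem_setOf_eq, not_le] at hx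
        linarith
      have h2 : ∫ x in Sᶜ, δ ∂μ = (μ Sᶜ).toReal * δ := by
        rw [setIntegral_const, _root_.smul_eq_mul, Measure.real]
      have h3 : (μ Sᶜ).toReal ≤ 1 := by
        simpa using ENNReal.toReal_mono (by simp) (prob_le_one (μ := μ) (s := Sᶜ))
      rw [h2] at h1
      nlinarith
    have hSint : ε - δ ≤ ∫ x in S, g x ∂μ := by
      have := integral_add_compl hSmeas hintg
      have h0 := hint (n k)
      linarith
    -- upper bound on ∫_T g
    have hTbound : ∫ x in T, g x ∂μ < δ := by
      have h1 : ∫ x in T, g x ∂μ ≤ ∫ x, H k x ∂μ := by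
        rw [← integral_indicator hTmeas]
        apply integral_mono (hintg.indicator hTmeas) (hInt (H k) _)
        intro x
        by_cases hx : x ∈ T
        · rw [Set.indicator_of_mem hx]
          obtain ⟨-, j, hj, hfx⟩ := hx
          have hjk : j < k := hmono.lt_iff_lt.mp hj
          have h2 := hHdom k j hjk x
          have h3 : (1 : ℝ) < (2 / δ) * f (n j) x := by
            rw [div_mul_eq_mul_div, lt_div_iff₀ hδ]
            linarith
          have := hf1 (n k) x
          simp only [hg]
          linarith
        · rw [Set.indicator_of_notMem hx]
          exact hHnn k x
      calc ∫ x in T, g x ∂μ ≤ ∫ x, H k x ∂μ := h1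
        _ < δ := hintH k
    -- assemble
    have hdiff : S \ U = S \ T := by rw [hT, Set.diff_self_inter]
    rw [hdiff]
    have hTS : T ⊆ S := Set.inter_subset_left
    rw [integral_diff hTmeas hintg.integrableOn hTS]
    have : ε - 2 * δ = ε' := by rw [hδdef]; ring
    linarith
end
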